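/- arXiv:2306.07644 — 7 statements merged into one kernel-verified Lean document; each statement's English description precedes it below -/
import Mathlib

section
/- In the FedAvg setup, fix a neuron h and a round t. Then there exist real coefficients λ_{k,i,x}, one for each client k ∈ {1,…,K}, local update i ∈ {0,…,n−1}, and sample x ∈ A^h(θ_{t,k,i}, B_{t,k,i}), with each λ_{k,i,x} ≠ 0 — explicitly λ_{k,i,x} = −(η/K) · ∂_h F_{φ_{t,k,i}, y}(ReLU(W_{t,k,i} x + b_{t,k,i})), where y is the label paired with x in B_{t,k,i} — such that the aggregated round-level updates satisfy ΔW^h_t = Σ_{k} Σ_{i} Σ_{x ∈ A^h(θ_{t,k,i},B_{t,k,i})} λ_{k,i,x} · x and Δb^h_t = Σ_{k} Σ_{i} Σ_{x ∈ A^h(θ_{t,k,i},B_{t,k,i})} λ_{k,i,x}. In particular ΔW^h_t lies in the linear span of the round-level activation set A^h_t and Δb^h_t equals the sum of the coefficients. -/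
noncomputable section

/-- Pre-activation `W^h · x + b^h` of neuron `h` on sample `x`. -/
def preact {d H : ℕ} (W : Fin H → Fin d → ℝ) (b : Fin H → ℝ) (x : Fin d → ℝ)
    (h : Fin H) : ℝ :=
  (∑ j, W h j * x j) + b h

/-- Componentwise ReLU output of the first layer. -/
def reluVec {d H : ℕ} (W : Fin H → Fin d → ℝ) (b : Fin H → ℝ) (x : Fin d → ℝ) :
    Fin H → ℝ :=
  fun h => max (preact W b x h) 0

/-- `F_{φ,y}(z) = ℓ(f(φ, z), y)`. -/
def Floss {H r C : ℕ} {Y : Type*} (f : (Fin r → ℝ) → (Fin H → ℝ) → Fin C → ℝ)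
    (l : (Fin C → ℝ) → Y → ℝ) (φ : Fin r → ℝ) (y : Y) (z : Fin H → ℝ) : ℝ :=
  l (f φ z) y

/-- Partial derivative of `F : ℝ^H → ℝ` in the `h`-th coordinate at `z`. -/
def dFh {H : ℕ} (F : (Fin H → ℝ) → ℝ) (z : Fin H → ℝ) (h : Fin H) : ℝ :=
  fderiv ℝ F z (Pi.single h 1)

/-- The loss of the model `θ = (W, b, φ)` on the batch `B`:
`L(θ; B) = ∑_{(x,y) ∈ B} ℓ(f(φ, ReLU(W x + b)), y)`. -/
def batchLoss {d H r C : ℕ} {Y : Type*} (f : (Fin r → ℝ) → (Fin H → ℝ) → Fin C → ℝ)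
    (l : (Fin C → ℝ) → Y → ℝ)
    (θ : (Fin H → Fin d → ℝ) × (Fin H → ℝ) × (Fin r → ℝ))
    (B : Finset ((Fin d → ℝ) × Y)) : ℝ :=
  ∑ p ∈ B, Floss f l θ.2.2 p.2 (reluVec θ.1 θ.2.1 p.1)

open Classical in
/-- Batch-level activation set `A^h(θ, B)` of neuron `h`, as a finset of
sample/label pairs of the batch. -/
def activB {d H r C : ℕ} {Y : Type*} (f : (Fin r → ℝ) → (Fin H → ℝ) → Fin C → ℝ)
    (l : (Fin C → ℝ) → Y → ℝ)
    (θ : (Fin H → Fin d → ℝ) × (Fin H → ℝ) × (Fin r → ℝ))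
    (B : Finset ((Fin d → ℝ) × Y)) (h : Fin H) : Finset ((Fin d → ℝ) × Y) :=
  B.filter (fun p => 0 < preact θ.1 θ.2.1 p.1 h ∧
    dFh (Floss f l θ.2.2 p.2) (reluVec θ.1 θ.2.1 p.1) h ≠ 0)

/-- The gradient of a function on the parameter space, assembled coordinatewise
from directional derivatives. -/
def gradP {d H r : ℕ} (L : ((Fin H → Fin d → ℝ) × (Fin H → ℝ) × (Fin r → ℝ)) → ℝ)
    (θ : (Fin H → Fin d → ℝ) × (Fin H → ℝ) × (Fin r → ℝ)) :
    (Fin H → Fin d → ℝ) × (Fin H → ℝ) × (Fin r → ℝ) :=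
  (fun h j => fderiv ℝ L θ (Pi.single h (Pi.single j 1), 0, 0),
   fun h => fderiv ℝ L θ (0, Pi.single h 1, 0),
   fun s => fderiv ℝ L θ (0, 0, Pi.single s 1))

/-- Round-level activation set `A^h_t` of neuron `h`: the set of samples activating
neuron `h` at some local update of some client during the round. -/
def roundActiv {d H r C K : ℕ} {Y : Type*} (f : (Fin r → ℝ) → (Fin H → ℝ) → Fin C → ℝ)
    (l : (Fin C → ℝ) → Y → ℝ) (n : ℕ)
    (θ : Fin K → ℕ → ((Fin H → Fin d → ℝ) × (Fin H → ℝ) × (Fin r → ℝ)))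
    (Bt : Fin K → ℕ → Finset ((Fin d → ℝ) × Y)) (h : Fin H) : Set (Fin d → ℝ) :=
  {x | ∃ k, ∃ i < n, ∃ y, (x, y) ∈ activB f l (θ k i) (Bt k i) h}

/-- The explicit coefficient `λ_{k,i,x} = -(η/K) ∂_h F_{φ_{t,k,i},y}(ReLU(W_{t,k,i} x + b_{t,k,i}))`
attached to the occurrence of the sample/label pair `p` in the batch of client `k`
at local update `i`. -/
def lamKI {d H r C : ℕ} {Y : Type*} (f : (Fin r → ℝ) → (Fin H → ℝ) → Fin C → ℝ)
    (l : (Fin C → ℝ) → Y → ℝ) (η : ℝ) (K : ℕ)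
    (θ : (Fin H → Fin d → ℝ) × (Fin H → ℝ) × (Fin r → ℝ))
    (h : Fin H) (p : (Fin d → ℝ) × Y) : ℝ :=
  -(η / (K : ℝ)) * dFh (Floss f l θ.2.2 p.2) (reluVec θ.1 θ.2.1 p.1) h


open Filter in
lemma hasDerivAt_max_zero {a : ℝ} (ha : a ≠ 0) :
    HasDerivAt (fun t => max t 0) (if 0 < a then (1:ℝ) else 0) a := by
  rcases ha.lt_or_gt with hneg | hpos
  · rw [if_neg (not_lt.2 hneg.le)]
    have he : (fun t : ℝ => max t 0) =ᶠ[nhds a] fun _ => 0 := by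
      filter_upwards [Iio_mem_nhds hneg] with t ht
      exact max_eq_right ht.le
    exact (hasDerivAt_const a 0).congr_of_eventuallyEq he
  · rw [if_pos hpos]
    have he : (fun t : ℝ => max t 0) =ᶠ[nhds a] id := by
      filter_upwards [Ioi_mem_nhds hpos] with t ht
      exact max_eq_left ht.le
    exact (hasDerivAt_id a).congr_of_eventuallyEq he

def LxL (d H r : ℕ) (x : Fin d → ℝ) (h' : Fin H) :
    ((Fin H → Fin d → ℝ) × (Fin H → ℝ) × (Fin r → ℝ)) →ₗ[ℝ] ℝ where
  toFun v := (∑ j, v.1 h' j * x j) + v.2.1 h'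
  map_add' u v := by
    simp only [Prod.fst_add, Prod.snd_add, Pi.add_apply, add_mul,
      Finset.sum_add_distrib]
    ring
  map_smul' c v := by
    simp only [Prod.smul_fst, Prod.smul_snd, Pi.smul_apply, smul_eq_mul,
      RingHom.id_apply, Finset.mul_sum, mul_add, mul_assoc]

def LxCLM (d H r : ℕ) (x : Fin d → ℝ) (h' : Fin H) :
    ((Fin H → Fin d → ℝ) × (Fin H → ℝ) × (Fin r → ℝ)) →L[ℝ] ℝ :=
  (LxL d H r x h').toContinuousLinearMap

lemma LxCLM_single {d H r : ℕ} (x : Fin d → ℝ) (h h' : Fin H) (j : Fin d) :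
    LxCLM d H r x h' (Pi.single h (Pi.single j 1), 0, 0)
      = if h' = h then x j else 0 := by
  simp only [LxCLM, LinearMap.coe_toContinuousLinearMap', LxL, LinearMap.coe_mk,
    AddHom.coe_mk, Pi.zero_apply, add_zero]
  by_cases hh : h' = h
  · subst hh
    simp [Pi.single_apply, Finset.sum_ite_eq', ite_mul]
  · simp [Pi.single_apply, Ne.symm hh, hh]

lemma LxCLM_singleb {d H r : ℕ} (x : Fin d → ℝ) (h h' : Fin H) :
    LxCLM d H r x h' ((0 : Fin H → Fin d → ℝ), Pi.single h 1, 0)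
      = if h' = h then 1 else 0 := by
  simp only [LxCLM, LinearMap.coe_toContinuousLinearMap', LxL, LinearMap.coe_mk,
    AddHom.coe_mk, Pi.zero_apply, zero_mul, Finset.sum_const_zero, zero_add]
  simp [Pi.single_apply]

lemma preact_hasFDerivAt {d H r : ℕ} (x : Fin d → ℝ) (h' : Fin H)
    (θ : (Fin H → Fin d → ℝ) × (Fin H → ℝ) × (Fin r → ℝ)) :
    HasFDerivAt (fun ψ : (Fin H → Fin d → ℝ) × (Fin H → ℝ) × (Fin r → ℝ) =>
      preact ψ.1 ψ.2.1 x h') (LxCLM d H r x h') θ :=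
  (LxCLM d H r x h').hasFDerivAt

lemma fderiv_partial_z {r H : ℕ} {G : (Fin r → ℝ) × (Fin H → ℝ) → ℝ}
    (hG : Differentiable ℝ G) (φ : Fin r → ℝ) (z : Fin H → ℝ) (dz : Fin H → ℝ) :
    fderiv ℝ (fun w => G (φ, w)) z dz = fderiv ℝ G (φ, z) (0, dz) := by
  have h1 : HasFDerivAt (fun w : Fin H → ℝ => (φ, w))
      (((0 : (Fin H → ℝ) →L[ℝ] (Fin r → ℝ))).prod (ContinuousLinearMap.id ℝ _)) z :=
    (hasFDerivAt_const φ z).prodMk (hasFDerivAt_id z)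
  have h2 := (hG (φ, z)).hasFDerivAt.comp z h1
  have h3 : fderiv ℝ (fun w => G (φ, w)) z
      = (fderiv ℝ G (φ, z)).comp
        (((0 : (Fin H → ℝ) →L[ℝ] (Fin r → ℝ))).prod (ContinuousLinearMap.id ℝ _)) :=
    h2.fderiv
  rw [h3]
  rfl

lemma sample_hasFDeriv {d H r C : ℕ} {Y : Type*}
    (f : (Fin r → ℝ) → (Fin H → ℝ) → Fin C → ℝ)
    (l : (Fin C → ℝ) → Y → ℝ)
    (hf : Differentiable ℝ (fun q : (Fin r → ℝ) × (Fin H → ℝ) => f q.1 q.2))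
    (hl : ∀ y, Differentiable ℝ (fun u => l u y))
    (θ : (Fin H → Fin d → ℝ) × (Fin H → ℝ) × (Fin r → ℝ))
    (x : Fin d → ℝ) (y : Y)
    (hx : ∀ h', preact θ.1 θ.2.1 x h' ≠ 0) :
    ∃ Dp : ((Fin H → Fin d → ℝ) × (Fin H → ℝ) × (Fin r → ℝ)) →L[ℝ] ℝ,
      HasFDerivAt (fun ψ : (Fin H → Fin d → ℝ) × (Fin H → ℝ) × (Fin r → ℝ) =>
        Floss f l ψ.2.2 y (reluVec ψ.1 ψ.2.1 x)) Dp θ ∧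
      (∀ h j, Dp (Pi.single h (Pi.single j 1), 0, 0)
        = (if 0 < preact θ.1 θ.2.1 x h then (1:ℝ) else 0)
          * (dFh (Floss f l θ.2.2 y) (reluVec θ.1 θ.2.1 x) h * x j)) ∧
      (∀ h, Dp (0, Pi.single h 1, 0)
        = (if 0 < preact θ.1 θ.2.1 x h then (1:ℝ) else 0)
          * dFh (Floss f l θ.2.2 y) (reluVec θ.1 θ.2.1 x) h) := by
  classical
  set c : Fin H → ℝ := fun h' => if 0 < preact θ.1 θ.2.1 x h' then (1:ℝ) else 0 with hc
  set Dg : ((Fin H → Fin d → ℝ) × (Fin H → ℝ) × (Fin r → ℝ)) →L[ℝ] (Fin H → ℝ) :=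
    ContinuousLinearMap.pi (fun h' => c h' • LxCLM d H r x h') with hDg
  have hg : HasFDerivAt (fun ψ : (Fin H → Fin d → ℝ) × (Fin H → ℝ) × (Fin r → ℝ) =>
      reluVec ψ.1 ψ.2.1 x) Dg θ := by
    apply hasFDerivAt_pi.2
    intro h'
    exact (hasDerivAt_max_zero (hx h')).comp_hasFDerivAt θ (preact_hasFDerivAt x h' θ)
  set Dφ : ((Fin H → Fin d → ℝ) × (Fin H → ℝ) × (Fin r → ℝ)) →L[ℝ] (Fin r → ℝ) :=
    (ContinuousLinearMap.snd ℝ (Fin H → ℝ) (Fin r → ℝ)).comp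
      (ContinuousLinearMap.snd ℝ (Fin H → Fin d → ℝ) ((Fin H → ℝ) × (Fin r → ℝ))) with hDφ
  have hφ : HasFDerivAt (fun ψ : (Fin H → Fin d → ℝ) × (Fin H → ℝ) × (Fin r → ℝ) =>
      ψ.2.2) Dφ θ := Dφ.hasFDerivAt
  set G : (Fin r → ℝ) × (Fin H → ℝ) → ℝ := fun q => l (f q.1 q.2) y with hG
  have hGdiff : Differentiable ℝ G := (hl y).comp hf
  set z : Fin H → ℝ := reluVec θ.1 θ.2.1 x with hz
  have hcomp : HasFDerivAt (fun ψ : (Fin H → Fin d → ℝ) × (Fin H → ℝ) × (Fin r → ℝ) =>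
      Floss f l ψ.2.2 y (reluVec ψ.1 ψ.2.1 x))
      ((fderiv ℝ G (θ.2.2, z)).comp (Dφ.prod Dg)) θ :=
    by have := HasFDerivAt.comp (g := G) θ (hGdiff (θ.2.2, z)).hasFDerivAt (hφ.prodMk hg); exact this
  refine ⟨_, hcomp, ?_, ?_⟩
  · intro h j
    have hval : (Dφ.prod Dg) (Pi.single h (Pi.single j 1), 0, 0)
        = ((0 : Fin r → ℝ), Pi.single h (c h * x j)) := by
      refine Prod.ext rfl ?_
      funext h'
      simp only [ContinuousLinearMap.prod_apply, Dg, ContinuousLinearMap.pi_apply,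
        ContinuousLinearMap.smul_apply, smul_eq_mul, LxCLM_single]
      by_cases hh : h' = h
      · subst hh; simp
      · simp [hh, Pi.single_apply]
    simp only [ContinuousLinearMap.coe_comp', Function.comp_apply, hval]
    have hsingle : (Pi.single h (c h * x j) : Fin H → ℝ)
        = (c h * x j) • (Pi.single h 1 : Fin H → ℝ) := by
      funext h''
      simp [Pi.single_apply, mul_ite]
    have hsm : ((0 : Fin r → ℝ), Pi.single h (c h * x j))
        = (c h * x j) • ((0 : Fin r → ℝ), (Pi.single h 1 : Fin H → ℝ)) := by
      rw [Prod.smul_mk, smul_zero, ← hsingle]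
    rw [hsm, map_smul]
    have hd : dFh (Floss f l θ.2.2 y) z h = fderiv ℝ G (θ.2.2, z) (0, Pi.single h 1) := by
      rw [dFh, ← fderiv_partial_z hGdiff]
      rfl
    rw [smul_eq_mul, hd]
    ring
  · intro h
    have hval : (Dφ.prod Dg) (0, Pi.single h 1, 0)
        = ((0 : Fin r → ℝ), Pi.single h (c h)) := by
      refine Prod.ext rfl ?_
      funext h'
      simp only [ContinuousLinearMap.prod_apply, Dg, ContinuousLinearMap.pi_apply,
        ContinuousLinearMap.smul_apply, smul_eq_mul]
      rw [LxCLM_singleb]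
      by_cases hh : h' = h
      · subst hh; simp
      · simp [hh, Pi.single_apply]
    simp only [ContinuousLinearMap.coe_comp', Function.comp_apply, hval]
    have hsingle : (Pi.single h (c h) : Fin H → ℝ)
        = (c h) • (Pi.single h 1 : Fin H → ℝ) := by
      funext h''
      simp [Pi.single_apply, mul_ite]
    have hsm : ((0 : Fin r → ℝ), Pi.single h (c h))
        = (c h) • ((0 : Fin r → ℝ), (Pi.single h 1 : Fin H → ℝ)) := by
      rw [Prod.smul_mk, smul_zero, ← hsingle]
    rw [hsm, map_smul]
    have hd : dFh (Floss f l θ.2.2 y) z h = fderiv ℝ G (θ.2.2, z) (0, Pi.single h 1) := by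
      rw [dFh, ← fderiv_partial_z hGdiff]
      rfl
    rw [smul_eq_mul, hd]

lemma gradP_batch {d H r C : ℕ} {Y : Type*}
    (f : (Fin r → ℝ) → (Fin H → ℝ) → Fin C → ℝ)
    (l : (Fin C → ℝ) → Y → ℝ)
    (hf : Differentiable ℝ (fun q : (Fin r → ℝ) × (Fin H → ℝ) => f q.1 q.2))
    (hl : ∀ y, Differentiable ℝ (fun u => l u y))
    (θ : (Fin H → Fin d → ℝ) × (Fin H → ℝ) × (Fin r → ℝ))
    (B : Finset ((Fin d → ℝ) × Y))
    (hnd : ∀ h' : Fin H, ∀ p ∈ B, preact θ.1 θ.2.1 p.1 h' ≠ 0) (h : Fin H) :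
    (∀ j, (gradP (fun ψ => batchLoss f l ψ B) θ).1 h j
      = ∑ p ∈ activB f l θ B h,
          dFh (Floss f l θ.2.2 p.2) (reluVec θ.1 θ.2.1 p.1) h * p.1 j) ∧
    ((gradP (fun ψ => batchLoss f l ψ B) θ).2.1 h
      = ∑ p ∈ activB f l θ B h,
          dFh (Floss f l θ.2.2 p.2) (reluVec θ.1 θ.2.1 p.1) h) := by
  classical
  have key : ∀ p ∈ B, ∃ Dp : ((Fin H → Fin d → ℝ) × (Fin H → ℝ) × (Fin r → ℝ)) →L[ℝ] ℝ,
      HasFDerivAt (fun ψ : (Fin H → Fin d → ℝ) × (Fin H → ℝ) × (Fin r → ℝ) =>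
        Floss f l ψ.2.2 p.2 (reluVec ψ.1 ψ.2.1 p.1)) Dp θ ∧
      (∀ h j, Dp (Pi.single h (Pi.single j 1), 0, 0)
        = (if 0 < preact θ.1 θ.2.1 p.1 h then (1:ℝ) else 0)
          * (dFh (Floss f l θ.2.2 p.2) (reluVec θ.1 θ.2.1 p.1) h * p.1 j)) ∧
      (∀ h, Dp (0, Pi.single h 1, 0)
        = (if 0 < preact θ.1 θ.2.1 p.1 h then (1:ℝ) else 0)
          * dFh (Floss f l θ.2.2 p.2) (reluVec θ.1 θ.2.1 p.1) h) := by
    intro p hp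
    exact sample_hasFDeriv f l hf hl θ p.1 p.2 (fun h' => hnd h' p hp)
  choose! Dp hDp hW hb using key
  have hsum : HasFDerivAt (fun ψ : (Fin H → Fin d → ℝ) × (Fin H → ℝ) × (Fin r → ℝ) =>
      batchLoss f l ψ B) (∑ p ∈ B, Dp p) θ :=
    HasFDerivAt.fun_sum (fun p hp => hDp p hp)
  have hfd : fderiv ℝ (fun ψ : (Fin H → Fin d → ℝ) × (Fin H → ℝ) × (Fin r → ℝ) =>
      batchLoss f l ψ B) θ = ∑ p ∈ B, Dp p := hsum.fderiv
  constructor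
  · intro j
    show fderiv ℝ (fun ψ => batchLoss f l ψ B) θ (Pi.single h (Pi.single j 1), 0, 0) = _
    rw [hfd, ContinuousLinearMap.sum_apply]
    rw [Finset.sum_congr rfl (fun p hp => hW p hp h j)]
    rw [activB, Finset.sum_filter]
    refine Finset.sum_congr rfl (fun p hp => ?_)
    by_cases h1 : 0 < preact θ.1 θ.2.1 p.1 h
    · by_cases h2 : dFh (Floss f l θ.2.2 p.2) (reluVec θ.1 θ.2.1 p.1) h ≠ 0
      · simp [h1, h2]
      · push_neg at h2
        simp [h2]
    · simp [h1]
  · show fderiv ℝ (fun ψ => batchLoss f l ψ B) θ (0, Pi.single h 1, 0) = _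
    rw [hfd, ContinuousLinearMap.sum_apply]
    rw [Finset.sum_congr rfl (fun p hp => hb p hp h)]
    rw [activB, Finset.sum_filter]
    refine Finset.sum_congr rfl (fun p hp => ?_)
    by_cases h1 : 0 < preact θ.1 θ.2.1 p.1 h
    · by_cases h2 : dFh (Floss f l θ.2.2 p.2) (reluVec θ.1 θ.2.1 p.1) h ≠ 0
      · simp [h1, h2]
      · push_neg at h2
        simp [h2]
    · simp [h1]

theorem stmt4 {d H r C K : ℕ} {Y : Type*} (hK : 0 < K)
    (f : (Fin r → ℝ) → (Fin H → ℝ) → Fin C → ℝ)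
    (l : (Fin C → ℝ) → Y → ℝ)
    (hf : Differentiable ℝ (fun q : (Fin r → ℝ) × (Fin H → ℝ) => f q.1 q.2))
    (hl : ∀ y, Differentiable ℝ (fun u => l u y))
    (n : ℕ) (η : ℝ) (hη : 0 < η)
    (θprev : (Fin H → Fin d → ℝ) × (Fin H → ℝ) × (Fin r → ℝ))
    (D : Fin K → Finset ((Fin d → ℝ) × Y))
    (Bt : Fin K → ℕ → Finset ((Fin d → ℝ) × Y))
    (θ : Fin K → ℕ → ((Fin H → Fin d → ℝ) × (Fin H → ℝ) × (Fin r → ℝ)))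
    (hBD : ∀ k, ∀ i < n, Bt k i ⊆ D k)
    (hinj : ∀ k, ∀ i < n, ∀ p ∈ Bt k i, ∀ q ∈ Bt k i, p.1 = q.1 → p = q)
    (hinit : ∀ k, θ k 0 = θprev)
    (hstep : ∀ k, ∀ i < n,
      θ k (i + 1) = θ k i - η • gradP (fun ψ => batchLoss f l ψ (Bt k i)) (θ k i))
    (hnd : ∀ k, ∀ i < n, ∀ h' : Fin H, ∀ p ∈ Bt k i,
      preact (θ k i).1 (θ k i).2.1 p.1 h' ≠ 0)
    (θt : (Fin H → Fin d → ℝ) × (Fin H → ℝ) × (Fin r → ℝ))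
    (hagg : θt = (K : ℝ)⁻¹ • ∑ k, θ k n)
    (h : Fin H) :
    (∀ k, ∀ i < n, ∀ p ∈ activB f l (θ k i) (Bt k i) h, lamKI f l η K (θ k i) h p ≠ 0) ∧
    θt.1 h - θprev.1 h
      = ∑ k, ∑ i ∈ Finset.range n, ∑ p ∈ activB f l (θ k i) (Bt k i) h,
          lamKI f l η K (θ k i) h p • p.1 ∧
    θt.2.1 h - θprev.2.1 h
      = ∑ k, ∑ i ∈ Finset.range n, ∑ p ∈ activB f l (θ k i) (Bt k i) h,
          lamKI f l η K (θ k i) h p := by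
  classical
  have hK' : (K:ℝ) ≠ 0 := Nat.cast_ne_zero.2 hK.ne'
  have hgrad := fun k i (hi : i < n) =>
    gradP_batch f l hf hl (θ k i) (Bt k i) (fun h' p hp => hnd k i hi h' p hp) h
  have stepW : ∀ k, ∀ i < n, ∀ j, (θ k (i+1)).1 h j - (θ k i).1 h j
      = -η * ∑ p ∈ activB f l (θ k i) (Bt k i) h,
          dFh (Floss f l (θ k i).2.2 p.2) (reluVec (θ k i).1 (θ k i).2.1 p.1) h * p.1 j := by
    intro k i hi j
    rw [hstep k i hi]
    simp only [Prod.fst_sub, Pi.sub_apply, Prod.smul_fst, Pi.smul_apply, smul_eq_mul]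
    rw [(hgrad k i hi).1 j]
    ring
  have stepb : ∀ k, ∀ i < n, (θ k (i+1)).2.1 h - (θ k i).2.1 h
      = -η * ∑ p ∈ activB f l (θ k i) (Bt k i) h,
          dFh (Floss f l (θ k i).2.2 p.2) (reluVec (θ k i).1 (θ k i).2.1 p.1) h := by
    intro k i hi
    rw [hstep k i hi]
    simp only [Prod.snd_sub, Prod.fst_sub, Pi.sub_apply, Prod.smul_snd, Prod.smul_fst,
      Pi.smul_apply, smul_eq_mul]
    rw [(hgrad k i hi).2]
    ring
  have teleW : ∀ k, ∀ j : Fin d, (θ k n).1 h j - θprev.1 h j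
      = ∑ i ∈ Finset.range n, ((θ k (i+1)).1 h j - (θ k i).1 h j) := by
    intro k j
    rw [Finset.sum_range_sub (f := fun i => (θ k i).1 h j), hinit]
  have teleb : ∀ k, (θ k n).2.1 h - θprev.2.1 h
      = ∑ i ∈ Finset.range n, ((θ k (i+1)).2.1 h - (θ k i).2.1 h) := by
    intro k
    rw [Finset.sum_range_sub (f := fun i => (θ k i).2.1 h), hinit]
  have aggW : ∀ j, θt.1 h j = (K:ℝ)⁻¹ * ∑ k, (θ k n).1 h j := by
    intro j
    rw [hagg]
    simp [Prod.fst_sum, Prod.smul_fst, Pi.smul_apply, Finset.sum_apply, smul_eq_mul]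
  have aggb : θt.2.1 h = (K:ℝ)⁻¹ * ∑ k, (θ k n).2.1 h := by
    rw [hagg]
    simp [Prod.snd_sum, Prod.fst_sum, Prod.smul_snd, Prod.smul_fst, Pi.smul_apply,
      Finset.sum_apply, smul_eq_mul]
  refine ⟨?_, ?_, ?_⟩
  · intro k i hi p hp
    rw [activB, Finset.mem_filter] at hp
    exact mul_ne_zero (neg_ne_zero.2 (div_ne_zero hη.ne' hK')) hp.2.2
  · funext j
    have hRHS : (∑ k, ∑ i ∈ Finset.range n, ∑ p ∈ activB f l (θ k i) (Bt k i) h,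
          lamKI f l η K (θ k i) h p • p.1) j
        = ∑ k, ∑ i ∈ Finset.range n, -(η/(K:ℝ)) *
            ∑ p ∈ activB f l (θ k i) (Bt k i) h,
              dFh (Floss f l (θ k i).2.2 p.2) (reluVec (θ k i).1 (θ k i).2.1 p.1) h * p.1 j := by
      simp only [Finset.sum_apply, Pi.smul_apply, smul_eq_mul, lamKI]
      refine Finset.sum_congr rfl fun k _ => Finset.sum_congr rfl fun i _ => ?_
      rw [Finset.mul_sum]
      exact Finset.sum_congr rfl fun p _ => (mul_assoc _ _ _)
    rw [Pi.sub_apply, hRHS]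
    calc θt.1 h j - θprev.1 h j
        = (K:ℝ)⁻¹ * ∑ k, ((θ k n).1 h j - θprev.1 h j) := by
          rw [aggW j, Finset.sum_sub_distrib, Finset.sum_const, Finset.card_univ,
            Fintype.card_fin, mul_sub, nsmul_eq_mul]
          field_simp
      _ = ∑ k, ∑ i ∈ Finset.range n, -(η/(K:ℝ)) *
            ∑ p ∈ activB f l (θ k i) (Bt k i) h,
              dFh (Floss f l (θ k i).2.2 p.2) (reluVec (θ k i).1 (θ k i).2.1 p.1) h * p.1 j := by
          rw [Finset.mul_sum]
          refine Finset.sum_congr rfl fun k _ => ?_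
          rw [teleW k j,
            Finset.sum_congr rfl (fun i hi => stepW k i (Finset.mem_range.1 hi) j),
            Finset.mul_sum]
          refine Finset.sum_congr rfl fun i _ => ?_
          field_simp
  · have hRHS : (∑ k, ∑ i ∈ Finset.range n, ∑ p ∈ activB f l (θ k i) (Bt k i) h,
          lamKI f l η K (θ k i) h p)
        = ∑ k, ∑ i ∈ Finset.range n, -(η/(K:ℝ)) *
            ∑ p ∈ activB f l (θ k i) (Bt k i) h,
              dFh (Floss f l (θ k i).2.2 p.2) (reluVec (θ k i).1 (θ k i).2.1 p.1) h := by
      simp only [lamKI]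
      refine Finset.sum_congr rfl fun k _ => Finset.sum_congr rfl fun i _ => ?_
      rw [Finset.mul_sum]
    rw [hRHS]
    calc θt.2.1 h - θprev.2.1 h
        = (K:ℝ)⁻¹ * ∑ k, ((θ k n).2.1 h - θprev.2.1 h) := by
          rw [aggb, Finset.sum_sub_distrib, Finset.sum_const, Finset.card_univ,
            Fintype.card_fin, mul_sub, nsmul_eq_mul]
          field_simp
      _ = ∑ k, ∑ i ∈ Finset.range n, -(η/(K:ℝ)) *
            ∑ p ∈ activB f l (θ k i) (Bt k i) h,
              dFh (Floss f l (θ k i).2.2 p.2) (reluVec (θ k i).1 (θ k i).2.1 p.1) h := by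
          rw [Finset.mul_sum]
          refine Finset.sum_congr rfl fun k _ => ?_
          rw [teleb k,
            Finset.sum_congr rfl (fun i hi => stepb k i (Finset.mem_range.1 hi)),
            Finset.mul_sum]
          refine Finset.sum_congr rfl fun i _ => ?_
          field_simp
end
end

section
/- In the FedAvg setup, fix a neuron h and a round t, and suppose the round-level activation set is a singleton: A^h_t = {x} for some x ∈ ℝ^d. Then ΔW^h_t = Δb^h_t · x. Consequently, if Δb^h_t ≠ 0, then x = ΔW^h_t / Δb^h_t, i.e., the isolated sample x is exactly recovered as the ratio of the aggregated weight update to the aggregated bias update for neuron h. -/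
noncomputable section

/- ===== auxiliary machinery ===== -/
abbrev Pa (d H r : ℕ) := (Fin H → Fin d → ℝ) × (Fin H → ℝ) × (Fin r → ℝ)

def preactL {d H r : ℕ} (x : Fin d → ℝ) (h : Fin H) : Pa d H r →ₗ[ℝ] ℝ where
  toFun ψ := preact ψ.1 ψ.2.1 x h
  map_add' ψ χ := by simp [preact, add_mul, Finset.sum_add_distrib]; ring
  map_smul' c ψ := by simp [preact, Finset.mul_sum, mul_add, mul_assoc]

def preactC {d H r : ℕ} (x : Fin d → ℝ) (h : Fin H) : Pa d H r →L[ℝ] ℝ :=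
  LinearMap.toContinuousLinearMap (preactL x h)

lemma preactC_apply {d H r : ℕ} (x : Fin d → ℝ) (h : Fin H) (ψ : Pa d H r) :
    preactC x h ψ = preact ψ.1 ψ.2.1 x h := rfl

lemma hasFDeriv_preact {d H r : ℕ} (x : Fin d → ℝ) (h : Fin H) (θ : Pa d H r) :
    HasFDerivAt (fun ψ : Pa d H r => preact ψ.1 ψ.2.1 x h) (preactC x h) θ :=
  (preactC x h).hasFDerivAt

def reluD {d H r : ℕ} (θ : Pa d H r) (x : Fin d → ℝ) : Pa d H r →L[ℝ] (Fin H → ℝ) :=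
  ContinuousLinearMap.pi (fun h => if 0 < preact θ.1 θ.2.1 x h then preactC x h else 0)

open Filter Topology in
lemma hasFDeriv_reluVec {d H r : ℕ} (θ : Pa d H r) (x : Fin d → ℝ)
    (hnd : ∀ h, preact θ.1 θ.2.1 x h ≠ 0) :
    HasFDerivAt (fun ψ : Pa d H r => reluVec ψ.1 ψ.2.1 x) (reluD θ x) θ := by
  apply hasFDerivAt_pi.2
  intro h
  have hc : Continuous fun ψ : Pa d H r => preact ψ.1 ψ.2.1 x h := by
    exact (preactC (r := r) x h).continuous
  rcases (hnd h).lt_or_gt with hneg | hpos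
  · rw [if_neg (not_lt.2 hneg.le)]
    have hev : (fun ψ : Pa d H r => reluVec ψ.1 ψ.2.1 x h) =ᶠ[𝓝 θ] fun _ => (0 : ℝ) := by
      filter_upwards [(hc.tendsto θ).eventually_lt_const hneg] with ψ hψ
      simp [reluVec, max_eq_right hψ.le]
    exact (hasFDerivAt_const (0 : ℝ) θ).congr_of_eventuallyEq hev
  · rw [if_pos hpos]
    have hev : (fun ψ : Pa d H r => reluVec ψ.1 ψ.2.1 x h)
        =ᶠ[𝓝 θ] fun ψ => preact ψ.1 ψ.2.1 x h := by
      filter_upwards [(hc.tendsto θ).eventually_const_lt hpos] with ψ hψ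
      simp [reluVec, max_eq_left hψ.le]
    exact (hasFDeriv_preact x h θ).congr_of_eventuallyEq hev

section sample
variable {d H r C : ℕ} {Y : Type*}
variable (f : (Fin r → ℝ) → (Fin H → ℝ) → Fin C → ℝ) (l : (Fin C → ℝ) → Y → ℝ)

/-- the outer map `(φ, z) ↦ ℓ(f(φ,z), y)` -/
def outerF (y : Y) : (Fin r → ℝ) × (Fin H → ℝ) → ℝ := fun q => l (f q.1 q.2) y

variable (hf : Differentiable ℝ (fun q : (Fin r → ℝ) × (Fin H → ℝ) => f q.1 q.2))
    (hl : ∀ y, Differentiable ℝ (fun u => l u y))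

include hf hl in
lemma outerF_diff (y : Y) : Differentiable ℝ (outerF f l y) := (hl y).comp hf

include hf hl in
/-- `fderiv` of `F_{φ,y}` in terms of the outer map. -/
lemma fderiv_Floss (φ : Fin r → ℝ) (y : Y) (z : Fin H → ℝ) (w : Fin H → ℝ) :
    fderiv ℝ (Floss f l φ y) z w = fderiv ℝ (outerF f l y) (φ, z) (0, w) := by
  have h1 : HasFDerivAt (Floss f l φ y)
      ((fderiv ℝ (outerF f l y) (φ, z)).comp (ContinuousLinearMap.inr ℝ _ _)) z :=
    ((outerF_diff f l hf hl y (φ, z)).hasFDerivAt).comp z (hasFDerivAt_prodMk_right φ z)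
  rw [h1.fderiv]; rfl

/-- the per-sample loss as a function of parameters -/
def sampleG (x : Fin d → ℝ) (y : Y) : Pa d H r → ℝ :=
  fun ψ => Floss f l ψ.2.2 y (reluVec ψ.1 ψ.2.1 x)

def snd2 (d H r : ℕ) : Pa d H r →L[ℝ] (Fin r → ℝ) :=
  (ContinuousLinearMap.snd ℝ (Fin H → ℝ) (Fin r → ℝ)).comp
    (ContinuousLinearMap.snd ℝ (Fin H → Fin d → ℝ) ((Fin H → ℝ) × (Fin r → ℝ)))

include hf hl in
lemma hasFDeriv_sampleG (θ : Pa d H r) (x : Fin d → ℝ) (y : Y)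
    (hnd : ∀ h, preact θ.1 θ.2.1 x h ≠ 0) :
    HasFDerivAt (sampleG f l x y)
      ((fderiv ℝ (outerF f l y) (θ.2.2, reluVec θ.1 θ.2.1 x)).comp
        ((snd2 d H r).prod (reluD θ x))) θ := by
  have hin : HasFDerivAt (fun ψ : Pa d H r => (ψ.2.2, reluVec ψ.1 ψ.2.1 x))
      ((snd2 d H r).prod (reluD θ x)) θ :=
    HasFDerivAt.prodMk ((snd2 d H r).hasFDerivAt) (hasFDeriv_reluVec θ x hnd)
  exact ((outerF_diff f l hf hl y _).hasFDerivAt).comp θ hin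
end sample
section eval
variable {d H r C : ℕ} {Y : Type*}
variable (f : (Fin r → ℝ) → (Fin H → ℝ) → Fin C → ℝ) (l : (Fin C → ℝ) → Y → ℝ)

lemma reluD_Wdir (θ : Pa d H r) (x : Fin d → ℝ) (h' : Fin H) (j : Fin d) :
    reluD θ x (Pi.single h' (Pi.single j 1), 0, 0)
      = Pi.single h' (if 0 < preact θ.1 θ.2.1 x h' then x j else 0) := by
  funext h
  simp only [reluD, ContinuousLinearMap.pi_apply]
  by_cases hh : h = h'
  · subst hh
    split_ifs with hp <;>
      simp [preactC_apply, preact, Pi.single_apply, ite_mul]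
  · split_ifs with hp <;>
      simp [preactC_apply, preact, Pi.single_apply, hh, ite_mul]

lemma reluD_bdir (θ : Pa d H r) (x : Fin d → ℝ) (h' : Fin H) :
    reluD θ x (0, Pi.single h' 1, 0)
      = Pi.single h' (if 0 < preact θ.1 θ.2.1 x h' then 1 else 0) := by
  funext h
  simp only [reluD, ContinuousLinearMap.pi_apply]
  by_cases hh : h = h'
  · subst hh
    split_ifs with hp <;>
      simp [preactC_apply, preact, Pi.single_apply]
  · split_ifs with hp <;>
      simp [preactC_apply, preact, Pi.single_apply, hh]

variable (hf : Differentiable ℝ (fun q : (Fin r → ℝ) × (Fin H → ℝ) => f q.1 q.2))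
    (hl : ∀ y, Differentiable ℝ (fun u => l u y))

include hf hl in
lemma outerF_single (φ : Fin r → ℝ) (y : Y) (z : Fin H → ℝ) (h' : Fin H) (c : ℝ) :
    fderiv ℝ (outerF f l y) (φ, z) ((0 : Fin r → ℝ), Pi.single h' c)
      = c * dFh (Floss f l φ y) z h' := by
  have h1 : ((0 : Fin r → ℝ), Pi.single h' c)
      = c • (((0 : Fin r → ℝ), Pi.single h' 1) : (Fin r → ℝ) × (Fin H → ℝ)) := by
    ext
    · simp
    · simp [Pi.single_apply, Pi.smul_apply, mul_ite]
  rw [h1, map_smul, smul_eq_mul, dFh, fderiv_Floss f l hf hl]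

include hf hl in
lemma fderiv_sampleG_W (θ : Pa d H r) (x : Fin d → ℝ) (y : Y)
    (hnd : ∀ h, preact θ.1 θ.2.1 x h ≠ 0) (h' : Fin H) (j : Fin d) :
    fderiv ℝ (sampleG f l x y) θ (Pi.single h' (Pi.single j 1), 0, 0)
      = if 0 < preact θ.1 θ.2.1 x h'
          then dFh (Floss f l θ.2.2 y) (reluVec θ.1 θ.2.1 x) h' * x j else 0 := by
  rw [(hasFDeriv_sampleG f l hf hl θ x y hnd).fderiv]
  have hsnd : snd2 d H r (Pi.single h' (Pi.single j 1), 0, 0) = 0 := rfl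
  rw [ContinuousLinearMap.comp_apply, ContinuousLinearMap.prod_apply, hsnd,
    reluD_Wdir, outerF_single f l hf hl]
  split_ifs <;> ring

include hf hl in
lemma fderiv_sampleG_b (θ : Pa d H r) (x : Fin d → ℝ) (y : Y)
    (hnd : ∀ h, preact θ.1 θ.2.1 x h ≠ 0) (h' : Fin H) :
    fderiv ℝ (sampleG f l x y) θ (0, Pi.single h' 1, 0)
      = if 0 < preact θ.1 θ.2.1 x h'
          then dFh (Floss f l θ.2.2 y) (reluVec θ.1 θ.2.1 x) h' else 0 := by
  rw [(hasFDeriv_sampleG f l hf hl θ x y hnd).fderiv]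
  have hsnd : snd2 d H r (0, Pi.single h' 1, 0) = 0 := rfl
  rw [ContinuousLinearMap.comp_apply, ContinuousLinearMap.prod_apply, hsnd,
    reluD_bdir, outerF_single f l hf hl]
  split_ifs <;> ring
end eval
section batch
variable {d H r C : ℕ} {Y : Type*}
variable (f : (Fin r → ℝ) → (Fin H → ℝ) → Fin C → ℝ) (l : (Fin C → ℝ) → Y → ℝ)
variable (hf : Differentiable ℝ (fun q : (Fin r → ℝ) × (Fin H → ℝ) => f q.1 q.2))
    (hl : ∀ y, Differentiable ℝ (fun u => l u y))

include hf hl in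
lemma hasFDeriv_batch (θ : Pa d H r) (B : Finset ((Fin d → ℝ) × Y))
    (hndB : ∀ p ∈ B, ∀ h', preact θ.1 θ.2.1 p.1 h' ≠ 0) :
    HasFDerivAt (fun ψ : Pa d H r => batchLoss f l ψ B)
      (∑ p ∈ B, fderiv ℝ (sampleG f l p.1 p.2) θ) θ := by
  have : (fun ψ : Pa d H r => batchLoss f l ψ B)
      = fun ψ => ∑ p ∈ B, sampleG f l p.1 p.2 ψ := rfl
  rw [this]
  exact HasFDerivAt.fun_sum fun p hp =>
    (hasFDeriv_sampleG f l hf hl θ p.1 p.2 (hndB p hp)).differentiableAt.hasFDerivAt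

include hf hl in
lemma gradP_batch_W (θ : Pa d H r) (B : Finset ((Fin d → ℝ) × Y))
    (hndB : ∀ p ∈ B, ∀ h', preact θ.1 θ.2.1 p.1 h' ≠ 0) (h' : Fin H) (j : Fin d) :
    (gradP (fun ψ : Pa d H r => batchLoss f l ψ B) θ).1 h' j
      = ∑ p ∈ activB f l θ B h',
          dFh (Floss f l θ.2.2 p.2) (reluVec θ.1 θ.2.1 p.1) h' * p.1 j := by
  classical
  have hB := hasFDeriv_batch f l hf hl θ B hndB
  show fderiv ℝ (fun ψ : Pa d H r => batchLoss f l ψ B) θ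
      (Pi.single h' (Pi.single j 1), 0, 0) = _
  rw [hB.fderiv, ContinuousLinearMap.sum_apply, activB, Finset.sum_filter]
  refine Finset.sum_congr rfl fun p hp => ?_
  rw [fderiv_sampleG_W f l hf hl θ p.1 p.2 (hndB p hp)]
  by_cases h1 : 0 < preact θ.1 θ.2.1 p.1 h'
  · by_cases h2 : dFh (Floss f l θ.2.2 p.2) (reluVec θ.1 θ.2.1 p.1) h' = 0
    · simp [h1, h2]
    · simp [h1, h2]
  · simp [h1]

include hf hl in
lemma gradP_batch_b (θ : Pa d H r) (B : Finset ((Fin d → ℝ) × Y))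
    (hndB : ∀ p ∈ B, ∀ h', preact θ.1 θ.2.1 p.1 h' ≠ 0) (h' : Fin H) :
    (gradP (fun ψ : Pa d H r => batchLoss f l ψ B) θ).2.1 h'
      = ∑ p ∈ activB f l θ B h',
          dFh (Floss f l θ.2.2 p.2) (reluVec θ.1 θ.2.1 p.1) h' := by
  classical
  have hB := hasFDeriv_batch f l hf hl θ B hndB
  show fderiv ℝ (fun ψ : Pa d H r => batchLoss f l ψ B) θ
      (0, Pi.single h' 1, 0) = _
  rw [hB.fderiv, ContinuousLinearMap.sum_apply, activB, Finset.sum_filter]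
  refine Finset.sum_congr rfl fun p hp => ?_
  rw [fderiv_sampleG_b f l hf hl θ p.1 p.2 (hndB p hp)]
  by_cases h1 : 0 < preact θ.1 θ.2.1 p.1 h'
  · by_cases h2 : dFh (Floss f l θ.2.2 p.2) (reluVec θ.1 θ.2.1 p.1) h' = 0
    · simp [h1, h2]
    · simp [h1, h2]
  · simp [h1]

include hf hl in
lemma gradP_batch_single (θ : Pa d H r) (B : Finset ((Fin d → ℝ) × Y))
    (hndB : ∀ p ∈ B, ∀ h', preact θ.1 θ.2.1 p.1 h' ≠ 0) (h' : Fin H)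
    (x : Fin d → ℝ) (hx : ∀ p ∈ activB f l θ B h', p.1 = x) :
    (gradP (fun ψ : Pa d H r => batchLoss f l ψ B) θ).1 h'
      = ((gradP (fun ψ : Pa d H r => batchLoss f l ψ B) θ).2.1 h') • x := by
  funext j
  rw [Pi.smul_apply, smul_eq_mul, gradP_batch_W f l hf hl θ B hndB h' j,
    gradP_batch_b f l hf hl θ B hndB h', Finset.sum_mul]
  exact Finset.sum_congr rfl fun p hp => by rw [hx p hp]
end batch

theorem stmt5 {d H r C K : ℕ} {Y : Type*} (hK : 0 < K)
    (f : (Fin r → ℝ) → (Fin H → ℝ) → Fin C → ℝ)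
    (l : (Fin C → ℝ) → Y → ℝ)
    (hf : Differentiable ℝ (fun q : (Fin r → ℝ) × (Fin H → ℝ) => f q.1 q.2))
    (hl : ∀ y, Differentiable ℝ (fun u => l u y))
    (n : ℕ) (η : ℝ) (hη : 0 < η)
    (θprev : (Fin H → Fin d → ℝ) × (Fin H → ℝ) × (Fin r → ℝ))
    (D : Fin K → Finset ((Fin d → ℝ) × Y))
    (Bt : Fin K → ℕ → Finset ((Fin d → ℝ) × Y))
    (θ : Fin K → ℕ → ((Fin H → Fin d → ℝ) × (Fin H → ℝ) × (Fin r → ℝ)))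
    (hBD : ∀ k, ∀ i < n, Bt k i ⊆ D k)
    (hinj : ∀ k, ∀ i < n, ∀ p ∈ Bt k i, ∀ q ∈ Bt k i, p.1 = q.1 → p = q)
    (hinit : ∀ k, θ k 0 = θprev)
    (hstep : ∀ k, ∀ i < n,
      θ k (i + 1) = θ k i - η • gradP (fun ψ => batchLoss f l ψ (Bt k i)) (θ k i))
    (hnd : ∀ k, ∀ i < n, ∀ h' : Fin H, ∀ p ∈ Bt k i,
      preact (θ k i).1 (θ k i).2.1 p.1 h' ≠ 0)
    (θt : (Fin H → Fin d → ℝ) × (Fin H → ℝ) × (Fin r → ℝ))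
    (hagg : θt = (K : ℝ)⁻¹ • ∑ k, θ k n)
    (h : Fin H) (x : Fin d → ℝ)
    (hsingle : roundActiv f l n θ Bt h = {x}) :
    θt.1 h - θprev.1 h = (θt.2.1 h - θprev.2.1 h) • x ∧
    (θt.2.1 h - θprev.2.1 h ≠ 0 →
      x = (θt.2.1 h - θprev.2.1 h)⁻¹ • (θt.1 h - θprev.1 h)) := by
  classical
  have hx : ∀ k, ∀ i < n, ∀ p ∈ activB f l (θ k i) (Bt k i) h, p.1 = x := by
    intro k i hi p hp
    have hmem : p.1 ∈ roundActiv f l n θ Bt h := ⟨k, i, hi, p.2, by simpa using hp⟩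
    rw [hsingle] at hmem
    exact hmem
  -- per-client telescoping
  have hcl : ∀ k, ∀ i ≤ n,
      (θ k i).1 h - θprev.1 h = ((θ k i).2.1 h - θprev.2.1 h) • x := by
    intro k i
    induction i with
    | zero => intro _; simp [hinit k]
    | succ i ih =>
      intro hi1
      have hi : i < n := hi1
      have ihe := ih hi.le
      set G := gradP (fun ψ => batchLoss f l ψ (Bt k i)) (θ k i) with hG
      have hgw : G.1 h = (G.2.1 h) • x :=
        gradP_batch_single f l hf hl (θ k i) (Bt k i)
          (fun p hp h' => hnd k i hi h' p hp) h x (hx k i hi)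
      have hW : (θ k (i+1)).1 h = (θ k i).1 h - η • (G.1 h) := by
        rw [hstep k i hi]; rfl
      have hb : (θ k (i+1)).2.1 h = (θ k i).2.1 h - η * (G.2.1 h) := by
        rw [hstep k i hi]; rfl
      rw [hW, hb, hgw, smul_smul, sub_right_comm, ihe, ← sub_smul]
      congr 1
      ring
  set c : Fin K → ℝ := fun k => (θ k n).2.1 h - θprev.2.1 h with hc
  have hck : ∀ k, (θ k n).1 h = c k • x + θprev.1 h := fun k =>
    sub_eq_iff_eq_add.mp (hcl k n le_rfl)
  have hKne : (K : ℝ) ≠ 0 := Nat.cast_ne_zero.2 hK.ne'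
  have hWt : θt.1 h = (K : ℝ)⁻¹ • ∑ k, (θ k n).1 h := by
    rw [hagg]
    simp [Prod.fst_sum, Finset.sum_apply]
  have hbt : θt.2.1 h = (K : ℝ)⁻¹ * ∑ k, (θ k n).2.1 h := by
    rw [hagg]
    simp [Prod.snd_sum, Prod.fst_sum, Finset.sum_apply]
  have h1 : ∑ k, (θ k n).2.1 h = (∑ k, c k) + (K : ℝ) * θprev.2.1 h := by
    simp only [hc, Finset.sum_sub_distrib, Finset.sum_const, Finset.card_fin,
      nsmul_eq_mul]
    ring
  have hΔb : θt.2.1 h - θprev.2.1 h = (K : ℝ)⁻¹ * ∑ k, c k := by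
    rw [hbt, h1]
    field_simp
    ring
  have h2 : ∑ k, (θ k n).1 h = (∑ k, c k) • x + (K : ℝ) • θprev.1 h := by
    rw [Finset.sum_congr rfl fun k _ => hck k, Finset.sum_add_distrib,
      ← Finset.sum_smul, Finset.sum_const, Finset.card_fin]
    congr 1
    exact (Nat.cast_smul_eq_nsmul ℝ K (θprev.1 h)).symm
  have hΔW : θt.1 h - θprev.1 h = ((K : ℝ)⁻¹ * ∑ k, c k) • x := by
    rw [hWt, h2, smul_add, smul_smul, smul_smul, inv_mul_cancel₀ hKne, one_smul]
    abel
  have hmain : θt.1 h - θprev.1 h = (θt.2.1 h - θprev.2.1 h) • x := by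
    rw [hΔb, hΔW]
  refine ⟨hmain, fun hne => ?_⟩
  rw [hmain, smul_smul, inv_mul_cancel₀ hne, one_smul]
end
end

section
/- In the FedAvg setup, fix a round t, a client k, a neuron h, and an index j ∈ {0, …, n}. If the batch-level activation sets of neuron h are empty for all local updates before j, i.e., A^h(θ_{t,k,i}, B_{t,k,i}) = ∅ for all 0 ≤ i < j, then the extended weights of neuron h are unchanged during these updates: W^h_{t,k,j} = W^h_{t−1} and b^h_{t,k,j} = b^h_{t−1}. -/
noncomputable section

section Aux

variable {d H r C : ℕ} {Y : Type*}

/-- abbreviation for the parameter space -/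
local notation "PS" => ((Fin H → Fin d → ℝ) × (Fin H → ℝ) × (Fin r → ℝ))

lemma preact_diff (x : Fin d → ℝ) (h' : Fin H) :
    Differentiable ℝ (fun ψ : PS => preact ψ.1 ψ.2.1 x h') := by
  simp only [preact]
  fun_prop

open Classical in
/-- The "frozen-sign" smooth surrogate of the ReLU layer around `θ0`. -/
def gvec (θ0 : (Fin H → Fin d → ℝ) × (Fin H → ℝ) × (Fin r → ℝ)) (x : Fin d → ℝ)
    (ψ : (Fin H → Fin d → ℝ) × (Fin H → ℝ) × (Fin r → ℝ)) : Fin H → ℝ :=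
  fun h' => if 0 < preact θ0.1 θ0.2.1 x h' then preact ψ.1 ψ.2.1 x h' else 0

lemma gvec_diff (θ0 : PS) (x : Fin d → ℝ) :
    Differentiable ℝ (fun ψ : PS => gvec θ0 x ψ) := by
  rw [differentiable_pi]
  intro h'
  by_cases hc : 0 < preact θ0.1 θ0.2.1 x h'
  · simpa [gvec, hc] using preact_diff x h'
  · simpa [gvec, hc] using differentiable_const (0 : ℝ)

lemma surr_diff (f : (Fin r → ℝ) → (Fin H → ℝ) → Fin C → ℝ)
    (l : (Fin C → ℝ) → Y → ℝ)
    (hf : Differentiable ℝ (fun q : (Fin r → ℝ) × (Fin H → ℝ) => f q.1 q.2))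
    (hl : ∀ y, Differentiable ℝ (fun u => l u y))
    (θ0 : PS) (x : Fin d → ℝ) (y : Y) :
    Differentiable ℝ (fun ψ : PS => Floss f l ψ.2.2 y (gvec θ0 x ψ)) := by
  have hinner : Differentiable ℝ (fun ψ : PS => ((ψ.2.2, gvec θ0 x ψ) :
      (Fin r → ℝ) × (Fin H → ℝ))) := by
    apply Differentiable.prodMk
    · fun_prop
    · exact gvec_diff θ0 x
  exact ((hl y).comp hf).comp hinner

lemma Floss_diff (f : (Fin r → ℝ) → (Fin H → ℝ) → Fin C → ℝ)
    (l : (Fin C → ℝ) → Y → ℝ)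
    (hf : Differentiable ℝ (fun q : (Fin r → ℝ) × (Fin H → ℝ) => f q.1 q.2))
    (hl : ∀ y, Differentiable ℝ (fun u => l u y))
    (φ : Fin r → ℝ) (y : Y) :
    Differentiable ℝ (Floss f l φ y) := by
  have hinner : Differentiable ℝ (fun z : Fin H → ℝ => ((φ, z) :
      (Fin r → ℝ) × (Fin H → ℝ))) := (differentiable_const _).prodMk differentiable_id
  exact ((hl y).comp hf).comp hinner

/-- Key lemma: if the activation set of neuron `h` is empty and the batch is
nondegenerate, every directional derivative of the batch loss in a direction
supported on row `h` of `(W, b)` vanishes. -/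
lemma dir_zero (f : (Fin r → ℝ) → (Fin H → ℝ) → Fin C → ℝ)
    (l : (Fin C → ℝ) → Y → ℝ)
    (hf : Differentiable ℝ (fun q : (Fin r → ℝ) × (Fin H → ℝ) => f q.1 q.2))
    (hl : ∀ y, Differentiable ℝ (fun u => l u y))
    (θ0 : PS) (B : Finset ((Fin d → ℝ) × Y)) (h : Fin H)
    (hnd : ∀ h' : Fin H, ∀ p ∈ B, preact θ0.1 θ0.2.1 p.1 h' ≠ 0)
    (hA : activB f l θ0 B h = ∅)
    (w : Fin d → ℝ) (u : ℝ) :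
    fderiv ℝ (fun ψ : PS => batchLoss f l ψ B) θ0
      (Pi.single h w, Pi.single h u, 0) = 0 := by
  classical
  set e : PS := (Pi.single h w, Pi.single h u, 0) with he_def
  -- step 1: the batch loss agrees with a smooth surrogate near θ0
  have heq : (fun ψ : PS => batchLoss f l ψ B) =ᶠ[nhds θ0]
      (fun ψ : PS => ∑ p ∈ B, Floss f l ψ.2.2 p.2 (gvec θ0 p.1 ψ)) := by
    have hp : ∀ p ∈ B, ∀ᶠ ψ : PS in nhds θ0,
        reluVec ψ.1 ψ.2.1 p.1 = gvec θ0 p.1 ψ := by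
      intro p hp
      have hco : ∀ h' : Fin H, ∀ᶠ ψ : PS in nhds θ0,
          reluVec ψ.1 ψ.2.1 p.1 h' = gvec θ0 p.1 ψ h' := by
        intro h'
        rcases (hnd h' p hp).lt_or_gt with hneg | hpos
        · have : ∀ᶠ ψ : PS in nhds θ0, preact ψ.1 ψ.2.1 p.1 h' < 0 :=
            ((preact_diff p.1 h').continuous.continuousAt).eventually_lt
              continuousAt_const hneg
          filter_upwards [this] with ψ hψ
          simp [reluVec, gvec, not_lt_of_gt hneg, max_eq_right hψ.le, le_of_lt hψ]
        · have : ∀ᶠ ψ : PS in nhds θ0, 0 < preact ψ.1 ψ.2.1 p.1 h' :=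
            continuousAt_const.eventually_lt
              ((preact_diff p.1 h').continuous.continuousAt) hpos
          filter_upwards [this] with ψ hψ
          simp [reluVec, gvec, hpos, max_eq_left hψ.le]
      filter_upwards [Filter.eventually_all.2 hco] with ψ hψ
      funext h'
      exact hψ h'
    filter_upwards [(Filter.eventually_all_finset B).2 hp] with ψ hψ
    simp only [batchLoss]
    exact Finset.sum_congr rfl fun p hpB => by rw [hψ p hpB]
  rw [heq.fderiv_eq]
  have hdiffs : ∀ p ∈ B, DifferentiableAt ℝ
      (fun ψ : PS => Floss f l ψ.2.2 p.2 (gvec θ0 p.1 ψ)) θ0 :=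
    fun p _ => (surr_diff f l hf hl θ0 p.1 p.2).differentiableAt
  rw [fderiv_fun_sum hdiffs, ContinuousLinearMap.sum_apply]
  apply Finset.sum_eq_zero
  intro p hpB
  -- step 2: compute the directional derivative sample by sample
  set x := p.1
  set y := p.2
  set z0 : Fin H → ℝ := reluVec θ0.1 θ0.2.1 x with hz0
  set c : ℝ := if 0 < preact θ0.1 θ0.2.1 x h then (∑ j, w j * x j) + u else 0 with hc_def
  -- the surrogate along the line t ↦ θ0 + t • e
  have hline : ∀ t : ℝ, gvec θ0 x (θ0 + t • e) = z0 + (t * c) • (Pi.single h 1 : Fin H → ℝ) := by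
    intro t
    funext h'
    have h1 : (θ0 + t • e).1 = θ0.1 + t • (Pi.single h w : Fin H → Fin d → ℝ) := rfl
    have h2 : (θ0 + t • e).2.1 = θ0.2.1 + t • (Pi.single h u : Fin H → ℝ) := rfl
    by_cases hh : h' = h
    · subst hh
      have hsum : preact (θ0.1 + t • (Pi.single h' w : Fin H → Fin d → ℝ))
          (θ0.2.1 + t • (Pi.single h' u : Fin H → ℝ)) x h'
          = preact θ0.1 θ0.2.1 x h' + t * ((∑ j, w j * x j) + u) := by
        simp only [preact, Pi.add_apply, Pi.smul_apply, Pi.single_eq_same, smul_eq_mul,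
          add_mul, mul_assoc, Finset.sum_add_distrib, ← Finset.mul_sum]
        ring
      by_cases hc : 0 < preact θ0.1 θ0.2.1 x h'
      · simp only [gvec, h1, h2, if_pos hc, hsum, hz0, Pi.add_apply, Pi.smul_apply,
          Pi.single_eq_same, smul_eq_mul, reluVec, max_eq_left hc.le, hc_def]
        ring
      · have hle : preact θ0.1 θ0.2.1 x h' ≤ 0 := not_lt.1 hc
        simp only [gvec, h1, h2, if_neg hc, hz0, Pi.add_apply, Pi.smul_apply,
          Pi.single_eq_same, smul_eq_mul, reluVec, max_eq_right hle, hc_def]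
        ring
    · have hx1 : (Pi.single h w : Fin H → Fin d → ℝ) h' = 0 := Pi.single_eq_of_ne hh _
      have hx2 : (Pi.single h u : Fin H → ℝ) h' = 0 := Pi.single_eq_of_ne hh _
      have hpre : preact (θ0.1 + t • (Pi.single h w : Fin H → Fin d → ℝ))
          (θ0.2.1 + t • (Pi.single h u : Fin H → ℝ)) x h'
          = preact θ0.1 θ0.2.1 x h' := by
        simp [preact, Pi.add_apply, Pi.smul_apply, hx1, hx2]
      by_cases hc : 0 < preact θ0.1 θ0.2.1 x h'
      · simp [gvec, hc, h1, h2, hpre, hz0, reluVec, max_eq_left hc.le, he_def,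
          Pi.single_eq_of_ne hh]
      · simp [gvec, hc, h1, h2, hpre, hz0, reluVec, max_eq_right (not_lt.1 hc),
          Pi.single_eq_of_ne hh]
  have hphi : ∀ t : ℝ, (θ0 + t • e).2.2 = θ0.2.2 := by
    intro t
    show θ0.2.2 + t • (0 : Fin r → ℝ) = θ0.2.2
    simp
  -- derivative of F along the line
  have hF : DifferentiableAt ℝ (Floss f l θ0.2.2 y) z0 :=
    (Floss_diff f l hf hl θ0.2.2 y).differentiableAt
  set v : Fin H → ℝ := c • (Pi.single h 1 : Fin H → ℝ) with hv_def
  have hlineD : HasDerivAt (fun t : ℝ => z0 + t • v) v 0 := by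
    simpa using ((hasDerivAt_id (0 : ℝ)).smul_const v).const_add z0
  have hF' : HasFDerivAt (Floss f l θ0.2.2 y) (fderiv ℝ (Floss f l θ0.2.2 y) z0)
      ((fun t : ℝ => z0 + t • v) 0) := by
    simpa using hF.hasFDerivAt
  have hcomp : HasDerivAt
      (fun t : ℝ => Floss f l θ0.2.2 y (z0 + t • v))
      (fderiv ℝ (Floss f l θ0.2.2 y) z0 v) 0 := by have := hF'.comp_hasDerivAt 0 hlineD; exact this
  -- the directional derivative equals the derivative of F along the line
  have hsame : (fun t : ℝ => Floss f l (θ0 + t • e).2.2 y (gvec θ0 x (θ0 + t • e)))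
      = fun t : ℝ => Floss f l θ0.2.2 y (z0 + t • v) := by
    funext t
    rw [hphi t, hline t, ← smul_smul, hv_def]
  have hfd : fderiv ℝ (fun ψ : PS => Floss f l ψ.2.2 y (gvec θ0 x ψ)) θ0 e
      = fderiv ℝ (Floss f l θ0.2.2 y) z0 v := by
    rw [← (surr_diff f l hf hl θ0 x y).differentiableAt.lineDeriv_eq_fderiv]
    unfold lineDeriv
    rw [show (fun t : ℝ => Floss f l (θ0 + t • e).2.2 y (gvec θ0 x (θ0 + t • e)))
        = fun t : ℝ => Floss f l θ0.2.2 y (z0 + t • v)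
      from hsame] at *
    exact hcomp.deriv
  rw [hfd, map_smul, smul_eq_mul]
  by_cases hpos : 0 < preact θ0.1 θ0.2.1 x h
  · -- then dFh vanishes since the activation set is empty
    have hnotmem : p ∉ activB f l θ0 B h := by rw [hA]; exact Finset.notMem_empty p
    rw [activB, Finset.mem_filter] at hnotmem
    push_neg at hnotmem
    have := hnotmem hpB
    have hdz : dFh (Floss f l θ0.2.2 y) z0 h = 0 := by
      by_contra hne
      exact hne (this hpos)
    have : fderiv ℝ (Floss f l θ0.2.2 y) z0 (Pi.single h 1) = 0 := hdz
    rw [this, mul_zero]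
  · have : c = 0 := by rw [hc_def, if_neg hpos]
    rw [this, zero_mul]

end Aux

theorem stmt6 {d H r C : ℕ} {Y : Type*}
    (f : (Fin r → ℝ) → (Fin H → ℝ) → Fin C → ℝ)
    (l : (Fin C → ℝ) → Y → ℝ)
    (hf : Differentiable ℝ (fun q : (Fin r → ℝ) × (Fin H → ℝ) => f q.1 q.2))
    (hl : ∀ y, Differentiable ℝ (fun u => l u y))
    (n : ℕ) (η : ℝ) (hη : 0 < η)
    (θprev : (Fin H → Fin d → ℝ) × (Fin H → ℝ) × (Fin r → ℝ))
    (Bt : ℕ → Finset ((Fin d → ℝ) × Y))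
    (θ : ℕ → ((Fin H → Fin d → ℝ) × (Fin H → ℝ) × (Fin r → ℝ)))
    (hinj : ∀ i < n, ∀ p ∈ Bt i, ∀ q ∈ Bt i, p.1 = q.1 → p = q)
    (hinit : θ 0 = θprev)
    (hstep : ∀ i < n,
      θ (i + 1) = θ i - η • gradP (fun ψ => batchLoss f l ψ (Bt i)) (θ i))
    (hnd : ∀ i < n, ∀ h' : Fin H, ∀ p ∈ Bt i, preact (θ i).1 (θ i).2.1 p.1 h' ≠ 0)
    (h : Fin H) (j : ℕ) (hj : j ≤ n)
    (hempty : ∀ i < j, activB f l (θ i) (Bt i) h = ∅) :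
    (θ j).1 h = θprev.1 h ∧ (θ j).2.1 h = θprev.2.1 h := by
  induction j with
  | zero => rw [hinit]; exact ⟨rfl, rfl⟩
  | succ i ih =>
    have hi : i < n := Nat.lt_of_lt_of_le (Nat.lt_succ_self i) hj
    have ihh := ih (le_of_lt hi)
      (fun i' hi' => hempty i' (Nat.lt_succ_of_lt hi'))
    have hW0 : ∀ w : Fin d → ℝ,
        fderiv ℝ (fun ψ => batchLoss f l ψ (Bt i)) (θ i)
          (Pi.single h w, 0, 0) = 0 := by
      intro w
      have := dir_zero f l hf hl (θ i) (Bt i) h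
        (fun h' p hp => hnd i hi h' p hp) (hempty i (Nat.lt_succ_self i)) w 0
      simpa using this
    have hb0 : fderiv ℝ (fun ψ => batchLoss f l ψ (Bt i)) (θ i)
        (0, Pi.single h 1, 0) = 0 := by
      have := dir_zero f l hf hl (θ i) (Bt i) h
        (fun h' p hp => hnd i hi h' p hp) (hempty i (Nat.lt_succ_self i)) 0 1
      simpa using this
    rw [hstep i hi]
    constructor
    · have : (gradP (fun ψ => batchLoss f l ψ (Bt i)) (θ i)).1 h = 0 := by
        funext j'
        exact hW0 (Pi.single j' 1)
      show ((θ i).1 - η • (gradP (fun ψ => batchLoss f l ψ (Bt i)) (θ i)).1) h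
        = θprev.1 h
      simp [this, Pi.sub_apply, Pi.smul_apply, ihh.1]
    · have : (gradP (fun ψ => batchLoss f l ψ (Bt i)) (θ i)).2.1 h = 0 := hb0
      show ((θ i).2.1 - η • (gradP (fun ψ => batchLoss f l ψ (Bt i)) (θ i)).2.1) h
        = θprev.2.1 h
      simp [this, Pi.sub_apply, Pi.smul_apply, ihh.2]
end
end

section
/- In the FedAvg setup with uniqueness of samples, fix a neuron h and a round t, and define Ã^h_{t,0} = { x ∈ A^h_t : W^h_{t−1} · x + b^h_{t−1} > 0 }. If some sample x belonging to client k (i.e., (x, y) ∈ D_k for some label y) lies in the round-level activation set A^h_t, then there exists a sample x' belonging to client k (i.e., (x', y') ∈ D_k for some label y') with x' ∈ Ã^h_{t,0}. -/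
noncomputable section

namespace StmtAux

variable {d H r C : ℕ} {Y : Type*}

abbrev P (d H r : ℕ) := (Fin H → Fin d → ℝ) × (Fin H → ℝ) × (Fin r → ℝ)

/-- locally-smooth replacement of the ReLU layer, freezing the sign pattern at θ0 -/
def Srepl (θ0 : P d H r) (x : Fin d → ℝ) (θ : P d H r) : Fin H → ℝ :=
  fun h' => if 0 < preact θ0.1 θ0.2.1 x h' then preact θ.1 θ.2.1 x h' else 0

def sampleLoss (f : (Fin r → ℝ) → (Fin H → ℝ) → Fin C → ℝ) (l : (Fin C → ℝ) → Y → ℝ)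
    (x : Fin d → ℝ) (y : Y) (θ : P d H r) : ℝ :=
  Floss f l θ.2.2 y (reluVec θ.1 θ.2.1 x)

def sampleLoss' (f : (Fin r → ℝ) → (Fin H → ℝ) → Fin C → ℝ) (l : (Fin C → ℝ) → Y → ℝ)
    (θ0 : P d H r) (x : Fin d → ℝ) (y : Y) (θ : P d H r) : ℝ :=
  Floss f l θ.2.2 y (Srepl θ0 x θ)

lemma cont_preact (x : Fin d → ℝ) (h' : Fin H) :
    Continuous (fun θ : P d H r => preact θ.1 θ.2.1 x h') := by
  unfold preact; fun_prop

lemma diff_preact (x : Fin d → ℝ) (h' : Fin H) :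
    Differentiable ℝ (fun θ : P d H r => preact θ.1 θ.2.1 x h') := by
  unfold preact; fun_prop

lemma Srepl_self {θ0 : P d H r} {x : Fin d → ℝ}
    (hpos : ∀ h', preact θ0.1 θ0.2.1 x h' ≠ 0) :
    Srepl θ0 x θ0 = reluVec θ0.1 θ0.2.1 x := by
  funext h'
  by_cases hp : 0 < preact θ0.1 θ0.2.1 x h'
  · simp [Srepl, reluVec, hp, max_eq_left hp.le]
  · have hneg : preact θ0.1 θ0.2.1 x h' < 0 := lt_of_le_of_ne (not_lt.1 hp) (hpos h')
    simp [Srepl, reluVec, hp, max_eq_right hneg.le]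

lemma eventually_eq_sampleLoss (f : (Fin r → ℝ) → (Fin H → ℝ) → Fin C → ℝ)
    (l : (Fin C → ℝ) → Y → ℝ) {θ0 : P d H r} {x : Fin d → ℝ} (y : Y)
    (hpos : ∀ h', preact θ0.1 θ0.2.1 x h' ≠ 0) :
    sampleLoss f l x y =ᶠ[nhds θ0] sampleLoss' f l θ0 x y := by
  have key : ∀ᶠ θ in nhds θ0, ∀ h', reluVec θ.1 θ.2.1 x h' = Srepl θ0 x θ h' := by
    rw [Filter.eventually_all]
    intro h'
    by_cases hp : 0 < preact θ0.1 θ0.2.1 x h'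
    · have : ∀ᶠ θ in nhds θ0, 0 < preact θ.1 θ.2.1 x h' :=
        ((cont_preact x h').continuousAt).eventually (eventually_gt_nhds hp)
      exact this.mono fun θ hθ => by simp [reluVec, Srepl, hp, max_eq_left hθ.le]
    · have hneg : preact θ0.1 θ0.2.1 x h' < 0 := lt_of_le_of_ne (not_lt.1 hp) (hpos h')
      have : ∀ᶠ θ in nhds θ0, preact θ.1 θ.2.1 x h' < 0 :=
        ((cont_preact x h').continuousAt).eventually (eventually_lt_nhds hneg)
      exact this.mono fun θ hθ => by simp [reluVec, Srepl, hp, max_eq_right hθ.le]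
  exact key.mono fun θ hθ => by
    simp only [sampleLoss, sampleLoss']
    congr 1
    exact funext hθ

lemma diff_sampleLoss' (f : (Fin r → ℝ) → (Fin H → ℝ) → Fin C → ℝ)
    (l : (Fin C → ℝ) → Y → ℝ)
    (hf : Differentiable ℝ (fun q : (Fin r → ℝ) × (Fin H → ℝ) => f q.1 q.2))
    (hl : ∀ y, Differentiable ℝ (fun u => l u y))
    (θ0 : P d H r) (x : Fin d → ℝ) (y : Y) :
    Differentiable ℝ (sampleLoss' f l θ0 x y) := by
  have hS : Differentiable ℝ (fun θ : P d H r => Srepl θ0 x θ) := by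
    rw [differentiable_pi]
    intro h'
    by_cases hp : 0 < preact θ0.1 θ0.2.1 x h'
    · simpa [Srepl, hp] using diff_preact (r := r) x h'
    · simpa [Srepl, hp] using differentiable_const (0:ℝ)
  have hinner : Differentiable ℝ
      (fun θ : P d H r => ((θ.2.2, Srepl θ0 x θ) : (Fin r → ℝ) × (Fin H → ℝ))) :=
    Differentiable.prodMk (by fun_prop : Differentiable ℝ (fun θ : P d H r => θ.2.2)) hS
  exact ((hl y).comp hf).comp hinner

lemma diff_Floss (f : (Fin r → ℝ) → (Fin H → ℝ) → Fin C → ℝ)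
    (l : (Fin C → ℝ) → Y → ℝ)
    (hf : Differentiable ℝ (fun q : (Fin r → ℝ) × (Fin H → ℝ) => f q.1 q.2))
    (hl : ∀ y, Differentiable ℝ (fun u => l u y)) (φ : Fin r → ℝ) (y : Y) :
    Differentiable ℝ (Floss f l φ y) := by
  have : Differentiable ℝ (fun z : Fin H → ℝ => ((φ, z) : (Fin r → ℝ) × (Fin H → ℝ))) := by
    fun_prop
  exact ((hl y).comp hf).comp this


lemma preact_add_single (θ0 : P d H r) (x : Fin d → ℝ) (h h' : Fin H)
    (v : Fin d → ℝ) (β t : ℝ) :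
    preact (θ0.1 + t • (Pi.single h v : Fin H → Fin d → ℝ)) (θ0.2.1 + t • (Pi.single h β : Fin H → ℝ)) x h' =
      preact θ0.1 θ0.2.1 x h' +
        t * ((Pi.single h ((∑ j, v j * x j) + β) : Fin H → ℝ) h') := by
  rcases eq_or_ne h' h with rfl | hne
  · simp only [preact, Pi.add_apply, Pi.smul_apply, Pi.single_eq_same, smul_eq_mul]
    have : ∀ j ∈ Finset.univ, (θ0.1 h' j + t * v j) * x j
        = θ0.1 h' j * x j + t * (v j * x j) := by intro j _; ring
    rw [Finset.sum_congr rfl this, Finset.sum_add_distrib, ← Finset.mul_sum]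
    ring
  · simp [preact, Pi.single_eq_of_ne hne]

lemma line_eq (f : (Fin r → ℝ) → (Fin H → ℝ) → Fin C → ℝ) (l : (Fin C → ℝ) → Y → ℝ)
    {θ0 : P d H r} {x : Fin d → ℝ} (y : Y)
    (hpos : ∀ h', preact θ0.1 θ0.2.1 x h' ≠ 0)
    (h : Fin H) (v : Fin d → ℝ) (β : ℝ) (t : ℝ) :
    sampleLoss' f l θ0 x y
        (θ0 + t • ((Pi.single h v, Pi.single h β, 0) : P d H r)) =
      Floss f l θ0.2.2 y (reluVec θ0.1 θ0.2.1 x +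
        t • (Pi.single h (if 0 < preact θ0.1 θ0.2.1 x h then (∑ j, v j * x j) + β else 0) : Fin H → ℝ)) := by
  have h1 : (θ0 + t • ((Pi.single h v, Pi.single h β, 0) : P d H r)).1
      = θ0.1 + t • (Pi.single h v : Fin H → Fin d → ℝ) := rfl
  have h21 : (θ0 + t • ((Pi.single h v, Pi.single h β, 0) : P d H r)).2.1
      = θ0.2.1 + t • (Pi.single h β : Fin H → ℝ) := rfl
  have h22 : (θ0 + t • ((Pi.single h v, Pi.single h β, 0) : P d H r)).2.2 = θ0.2.2 := by
    show θ0.2.2 + t • (0 : Fin r → ℝ) = θ0.2.2; simp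
  simp only [sampleLoss']
  rw [h22]
  congr 1
  funext h'
  simp only [Srepl, h1, h21, preact_add_single, Pi.add_apply, Pi.smul_apply, smul_eq_mul]
  rcases eq_or_ne h' h with rfl | hne
  · by_cases hp : 0 < preact θ0.1 θ0.2.1 x h'
    · simp [hp, reluVec, max_eq_left hp.le, Pi.single_eq_same]
    · have hneg : preact θ0.1 θ0.2.1 x h' < 0 := lt_of_le_of_ne (not_lt.1 hp) (hpos h')
      simp [hp, reluVec, max_eq_right hneg.le, Pi.single_eq_same]
  · by_cases hp : 0 < preact θ0.1 θ0.2.1 x h'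
    · simp [hp, reluVec, max_eq_left hp.le, Pi.single_eq_of_ne hne]
    · have hneg : preact θ0.1 θ0.2.1 x h' < 0 := lt_of_le_of_ne (not_lt.1 hp) (hpos h')
      simp [hp, reluVec, max_eq_right hneg.le, Pi.single_eq_of_ne hne]


lemma dirDeriv (f : (Fin r → ℝ) → (Fin H → ℝ) → Fin C → ℝ) (l : (Fin C → ℝ) → Y → ℝ)
    (hf : Differentiable ℝ (fun q : (Fin r → ℝ) × (Fin H → ℝ) => f q.1 q.2))
    (hl : ∀ y, Differentiable ℝ (fun u => l u y))
    {θ0 : P d H r} {x : Fin d → ℝ} (y : Y)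
    (hpos : ∀ h', preact θ0.1 θ0.2.1 x h' ≠ 0)
    (h : Fin H) (v : Fin d → ℝ) (β : ℝ) :
    fderiv ℝ (sampleLoss f l x y) θ0 ((Pi.single h v, Pi.single h β, 0) : P d H r)
    = (if 0 < preact θ0.1 θ0.2.1 x h then (∑ j, v j * x j) + β else 0)
      * dFh (Floss f l θ0.2.2 y) (reluVec θ0.1 θ0.2.1 x) h := by
  set c : ℝ := if 0 < preact θ0.1 θ0.2.1 x h then (∑ j, v j * x j) + β else 0 with hc
  set dir : P d H r := (Pi.single h v, Pi.single h β, 0) with hdir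
  have heq := eventually_eq_sampleLoss f l y hpos
  rw [heq.fderiv_eq]
  have hG' := diff_sampleLoss' f l hf hl θ0 x y
  have hF := diff_Floss (H := H) f l hf hl θ0.2.2 y
  set z0 : Fin H → ℝ := reluVec θ0.1 θ0.2.1 x with hz0
  have hline1 : HasDerivAt (fun t : ℝ => θ0 + t • dir) dir 0 := by
    simpa using ((hasDerivAt_id (0:ℝ)).smul_const dir).const_add θ0
  have hA : HasDerivAt (fun t : ℝ => sampleLoss' f l θ0 x y (θ0 + t • dir))
      (fderiv ℝ (sampleLoss' f l θ0 x y) θ0 dir) 0 := by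
    have := ((hG' (θ0 + (0:ℝ) • dir)).hasFDerivAt).comp_hasDerivAt 0 hline1
    simp only [zero_smul, add_zero] at this; exact this
  have hline2 : HasDerivAt (fun t : ℝ => z0 + t • (Pi.single h c : Fin H → ℝ))
      (Pi.single h c) 0 := by
    simpa using ((hasDerivAt_id (0:ℝ)).smul_const (Pi.single h c : Fin H → ℝ)).const_add z0
  have hB : HasDerivAt
      (fun t : ℝ => Floss f l θ0.2.2 y (z0 + t • (Pi.single h c : Fin H → ℝ)))
      (fderiv ℝ (Floss f l θ0.2.2 y) z0 (Pi.single h c)) 0 := by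
    have := ((hF (z0 + (0:ℝ) • (Pi.single h c : Fin H → ℝ))).hasFDerivAt).comp_hasDerivAt
      0 hline2
    simp only [zero_smul, add_zero] at this; exact this
  have hfun : (fun t : ℝ => sampleLoss' f l θ0 x y (θ0 + t • dir))
      = fun t : ℝ => Floss f l θ0.2.2 y (z0 + t • (Pi.single h c : Fin H → ℝ)) :=
    funext fun t => line_eq f l y hpos h v β t
  rw [hfun] at hA
  rw [hA.unique hB]
  have hsingle : (Pi.single h c : Fin H → ℝ) = c • (Pi.single h 1 : Fin H → ℝ) := by
    funext h''
    rcases eq_or_ne h'' h with rfl | hne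
    · simp
    · simp [Pi.single_eq_of_ne hne]
  rw [hsingle, map_smul, dFh, smul_eq_mul]

lemma diffAt_sampleLoss (f : (Fin r → ℝ) → (Fin H → ℝ) → Fin C → ℝ)
    (l : (Fin C → ℝ) → Y → ℝ)
    (hf : Differentiable ℝ (fun q : (Fin r → ℝ) × (Fin H → ℝ) => f q.1 q.2))
    (hl : ∀ y, Differentiable ℝ (fun u => l u y))
    {θ0 : P d H r} {x : Fin d → ℝ} (y : Y)
    (hpos : ∀ h', preact θ0.1 θ0.2.1 x h' ≠ 0) :
    DifferentiableAt ℝ (sampleLoss f l x y) θ0 :=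
  (diff_sampleLoss' f l hf hl θ0 x y θ0).congr_of_eventuallyEq
    (eventually_eq_sampleLoss f l y hpos)

lemma grad_dir_zero (f : (Fin r → ℝ) → (Fin H → ℝ) → Fin C → ℝ)
    (l : (Fin C → ℝ) → Y → ℝ)
    (hf : Differentiable ℝ (fun q : (Fin r → ℝ) × (Fin H → ℝ) => f q.1 q.2))
    (hl : ∀ y, Differentiable ℝ (fun u => l u y))
    {θ0 : P d H r} {B : Finset ((Fin d → ℝ) × Y)}
    (hnd : ∀ h' : Fin H, ∀ p ∈ B, preact θ0.1 θ0.2.1 p.1 h' ≠ 0)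
    (h : Fin H)
    (hno : ∀ p ∈ B, p ∉ activB f l θ0 B h)
    (v : Fin d → ℝ) (β : ℝ) :
    fderiv ℝ (fun ψ => batchLoss f l ψ B) θ0
      ((Pi.single h v, Pi.single h β, 0) : P d H r) = 0 := by
  have hfun : (fun ψ => batchLoss f l ψ B)
      = fun ψ => ∑ p ∈ B, sampleLoss f l p.1 p.2 ψ := rfl
  rw [hfun, fderiv_fun_sum (fun p hp =>
    diffAt_sampleLoss f l hf hl p.2 (fun h' => hnd h' p hp))]
  rw [ContinuousLinearMap.sum_apply]
  refine Finset.sum_eq_zero fun p hp => ?_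
  rw [dirDeriv f l hf hl p.2 (fun h' => hnd h' p hp) h v β]
  have hnot := hno p hp
  rw [activB, Finset.mem_filter, not_and] at hnot
  have := hnot hp
  by_cases hpos : 0 < preact θ0.1 θ0.2.1 p.1 h
  · have hd : dFh (Floss f l θ0.2.2 p.2) (reluVec θ0.1 θ0.2.1 p.1) h = 0 := by
      by_contra hd
      exact this ⟨hpos, hd⟩
    rw [hd, mul_zero]
  · rw [if_neg hpos, zero_mul]

end StmtAux

open StmtAux in
theorem stmt8 {d H r C K : ℕ} {Y : Type*} (hK : 0 < K)
    (f : (Fin r → ℝ) → (Fin H → ℝ) → Fin C → ℝ)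
    (l : (Fin C → ℝ) → Y → ℝ)
    (hf : Differentiable ℝ (fun q : (Fin r → ℝ) × (Fin H → ℝ) => f q.1 q.2))
    (hl : ∀ y, Differentiable ℝ (fun u => l u y))
    (n : ℕ) (η : ℝ) (hη : 0 < η)
    (θprev : (Fin H → Fin d → ℝ) × (Fin H → ℝ) × (Fin r → ℝ))
    (D : Fin K → Finset ((Fin d → ℝ) × Y))
    (Bt : Fin K → ℕ → Finset ((Fin d → ℝ) × Y))
    (θ : Fin K → ℕ → ((Fin H → Fin d → ℝ) × (Fin H → ℝ) × (Fin r → ℝ)))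
    (hBD : ∀ k, ∀ i < n, Bt k i ⊆ D k)
    (hinit : ∀ k, θ k 0 = θprev)
    (hstep : ∀ k, ∀ i < n,
      θ k (i + 1) = θ k i - η • gradP (fun ψ => batchLoss f l ψ (Bt k i)) (θ k i))
    (hnd : ∀ k, ∀ i < n, ∀ h' : Fin H, ∀ p ∈ Bt k i,
      preact (θ k i).1 (θ k i).2.1 p.1 h' ≠ 0)
    (hunique : ∀ k₁ k₂ : Fin K, ∀ p₁ ∈ D k₁, ∀ p₂ ∈ D k₂, p₁.1 = p₂.1 → k₁ = k₂ ∧ p₁ = p₂)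
    (h : Fin H) (k : Fin K) (x : Fin d → ℝ)
    (hxk : ∃ y, (x, y) ∈ D k)
    (hxA : x ∈ roundActiv f l n θ Bt h) :
    ∃ x' : Fin d → ℝ, (∃ y', (x', y') ∈ D k) ∧
      x' ∈ roundActiv f l n θ Bt h ∧ 0 < preact θprev.1 θprev.2.1 x' h := by
  classical
  obtain ⟨y, hxy⟩ := hxk
  obtain ⟨k', i', hi'n, y', hact⟩ := hxA
  have hxB : (x, y') ∈ Bt k' i' := (Finset.mem_filter.1 hact).1
  have hxD' : (x, y') ∈ D k' := hBD k' i' hi'n hxB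
  obtain ⟨hkk, -⟩ := hunique k k' (x, y) hxy (x, y') hxD' rfl
  subst hkk
  have hex : ∃ i, i < n ∧ ∃ p : (Fin d → ℝ) × Y, p ∈ activB f l (θ k i) (Bt k i) h :=
    ⟨i', hi'n, (x, y'), hact⟩
  set i0 := Nat.find hex with hi0
  obtain ⟨hi0n, p0, hp0⟩ := Nat.find_spec hex
  have hmin : ∀ j < i0, ¬(j < n ∧ ∃ p, p ∈ activB f l (θ k j) (Bt k j) h) :=
    fun j hj => Nat.find_min hex hj
  have hfrozen : ∀ j ≤ i0, (θ k j).1 h = θprev.1 h ∧ (θ k j).2.1 h = θprev.2.1 h := by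
    intro j
    induction j with
    | zero => intro _; rw [hinit]; exact ⟨rfl, rfl⟩
    | succ j ih =>
      intro hj
      have hji : j < i0 := Nat.lt_of_succ_le hj
      have hjn : j < n := lt_trans hji hi0n
      have hne : ∀ p ∈ Bt k j, p ∉ activB f l (θ k j) (Bt k j) h :=
        fun p _ hmem => hmin j hji ⟨hjn, p, hmem⟩
      have hgW : ∀ (v : Fin d → ℝ) (β : ℝ),
          fderiv ℝ (fun ψ => batchLoss f l ψ (Bt k j)) (θ k j)
            ((Pi.single h v, Pi.single h β, 0) :
              (Fin H → Fin d → ℝ) × (Fin H → ℝ) × (Fin r → ℝ)) = 0 :=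
        fun v β => StmtAux.grad_dir_zero f l hf hl
          (fun h' p hp => hnd k j hjn h' p hp) h hne v β
      have hg1 : (gradP (fun ψ => batchLoss f l ψ (Bt k j)) (θ k j)).1 h = 0 := by
        funext j'
        have h0 := hgW (Pi.single j' 1) 0
        rw [Pi.single_zero] at h0
        exact h0
      have hg2 : (gradP (fun ψ => batchLoss f l ψ (Bt k j)) (θ k j)).2.1 h = 0 := by
        have h0 := hgW 0 1
        rw [Pi.single_zero] at h0
        exact h0
      obtain ⟨ihW, ihb⟩ := ih (le_of_lt hji)
      have hstepj := hstep k j hjn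
      constructor
      · have : (θ k (j + 1)).1 h =
            (θ k j).1 h - η • (gradP (fun ψ => batchLoss f l ψ (Bt k j)) (θ k j)).1 h := by
          rw [hstepj]; rfl
        rw [this, hg1, smul_zero, sub_zero, ihW]
      · have : (θ k (j + 1)).2.1 h =
            (θ k j).2.1 h - η • (gradP (fun ψ => batchLoss f l ψ (Bt k j)) (θ k j)).2.1 h := by
          rw [hstepj]; rfl
        rw [this, hg2, smul_zero, sub_zero, ihb]
  obtain ⟨hWf, hbf⟩ := hfrozen i0 le_rfl
  obtain ⟨hp0B, hposp, hdp⟩ := Finset.mem_filter.1 hp0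
  have hpre_eq : preact (θ k i0).1 (θ k i0).2.1 p0.1 h = preact θprev.1 θprev.2.1 p0.1 h := by
    rw [preact, preact, hWf, hbf]
  refine ⟨p0.1, ⟨p0.2, ?_⟩, ⟨k, i0, hi0n, p0.2, ?_⟩, ?_⟩
  · simpa only [Prod.mk.eta] using hBD k i0 hi0n hp0B
  · simpa only [Prod.mk.eta] using hp0
  · rw [← hpre_eq]; exact hposp
end
end

section
/- In the FedAvg setup with uniqueness of samples, fix a neuron h and a round t, and define Ã^h_{t,0} = { x ∈ A^h_t : W^h_{t−1} · x + b^h_{t−1} > 0 }. If Ã^h_{t,0} is a singleton {x'} and x' belongs to client k (i.e., (x', y') ∈ D_k for some label y'), then every sample x in the round-level activation set A^h_t belongs to client k (i.e., for every x ∈ A^h_t there is a label y with (x, y) ∈ D_k). -/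
noncomputable section

section Aux

variable {d H r C : ℕ} {Y : Type*}

abbrev PSpace (d H r : ℕ) := (Fin H → Fin d → ℝ) × (Fin H → ℝ) × (Fin r → ℝ)

open ContinuousLinearMap in
def paCLM (d H r : ℕ) (x : Fin d → ℝ) (h' : Fin H) : PSpace d H r →L[ℝ] ℝ :=
  (∑ j, (((proj j : (Fin d → ℝ) →L[ℝ] ℝ).comp
      (((proj h' : (Fin H → Fin d → ℝ) →L[ℝ] (Fin d → ℝ))).comp
        (fst ℝ (Fin H → Fin d → ℝ) ((Fin H → ℝ) × (Fin r → ℝ))))).smulRight (x j))) +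
  ((proj h' : (Fin H → ℝ) →L[ℝ] ℝ).comp
    ((fst ℝ (Fin H → ℝ) (Fin r → ℝ)).comp
      (snd ℝ (Fin H → Fin d → ℝ) ((Fin H → ℝ) × (Fin r → ℝ)))))

lemma paCLM_apply (x : Fin d → ℝ) (h' : Fin H) (ψ : PSpace d H r) :
    paCLM d H r x h' ψ = preact ψ.1 ψ.2.1 x h' := by
  simp [paCLM, preact, ContinuousLinearMap.sum_apply, smul_eq_mul]

lemma hasFDerivAt_preact (x : Fin d → ℝ) (h' : Fin H) (θ : PSpace d H r) :
    HasFDerivAt (fun ψ : PSpace d H r => preact ψ.1 ψ.2.1 x h') (paCLM d H r x h') θ := by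
  have h1 : (fun ψ : PSpace d H r => preact ψ.1 ψ.2.1 x h') = ⇑(paCLM d H r x h') :=
    funext fun ψ => (paCLM_apply x h' ψ).symm
  rw [h1]
  exact (paCLM d H r x h').hasFDerivAt

def Dz (θ : PSpace d H r) (x : Fin d → ℝ) (h' : Fin H) : PSpace d H r →L[ℝ] ℝ :=
  if 0 < preact θ.1 θ.2.1 x h' then paCLM d H r x h' else 0

lemma hasFDerivAt_relu_coord (θ : PSpace d H r) (x : Fin d → ℝ) (h' : Fin H)
    (hne : preact θ.1 θ.2.1 x h' ≠ 0) :
    HasFDerivAt (fun ψ : PSpace d H r => max (preact ψ.1 ψ.2.1 x h') 0) (Dz θ x h') θ := by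
  have hcont : Continuous (fun ψ : PSpace d H r => preact ψ.1 ψ.2.1 x h') := by
    have h1 : (fun ψ : PSpace d H r => preact ψ.1 ψ.2.1 x h') = ⇑(paCLM d H r x h') :=
      funext fun ψ => (paCLM_apply x h' ψ).symm
    rw [h1]; exact (paCLM d H r x h').continuous
  rcases hne.lt_or_gt with hneg | hpos
  · have hev : (fun ψ : PSpace d H r => max (preact ψ.1 ψ.2.1 x h') 0)
        =ᶠ[nhds θ] (fun _ => (0:ℝ)) := by
      filter_upwards [hcont.continuousAt.eventually (eventually_lt_nhds hneg)] with ψ hψ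
      exact max_eq_right hψ.le
    have h0 : Dz θ x h' = 0 := if_neg (not_lt.2 hneg.le)
    rw [h0]
    exact (hasFDerivAt_const (0:ℝ) θ).congr_of_eventuallyEq hev
  · have hev : (fun ψ : PSpace d H r => max (preact ψ.1 ψ.2.1 x h') 0)
        =ᶠ[nhds θ] (fun ψ : PSpace d H r => preact ψ.1 ψ.2.1 x h') := by
      filter_upwards [hcont.continuousAt.eventually (eventually_gt_nhds hpos)] with ψ hψ
      exact max_eq_left hψ.le
    have h0 : Dz θ x h' = paCLM d H r x h' := if_pos hpos
    rw [h0]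
    exact (hasFDerivAt_preact x h' θ).congr_of_eventuallyEq hev

lemma hasFDerivAt_reluVec (θ : PSpace d H r) (x : Fin d → ℝ)
    (hne : ∀ h', preact θ.1 θ.2.1 x h' ≠ 0) :
    HasFDerivAt (fun ψ : PSpace d H r => reluVec ψ.1 ψ.2.1 x)
      (ContinuousLinearMap.pi (fun h' => Dz θ x h')) θ :=
  hasFDerivAt_pi.2 (fun h' => hasFDerivAt_relu_coord θ x h' (hne h'))

variable (f : (Fin r → ℝ) → (Fin H → ℝ) → Fin C → ℝ) (l : (Fin C → ℝ) → Y → ℝ)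

def outMap (f : (Fin r → ℝ) → (Fin H → ℝ) → Fin C → ℝ) (l : (Fin C → ℝ) → Y → ℝ) (y : Y) :
    (Fin r → ℝ) × (Fin H → ℝ) → ℝ := fun q => l (f q.1 q.2) y

open ContinuousLinearMap in
lemma hasFDerivAt_summand
    (hf : Differentiable ℝ (fun q : (Fin r → ℝ) × (Fin H → ℝ) => f q.1 q.2))
    (hl : ∀ y, Differentiable ℝ (fun u => l u y))
    (θ : PSpace d H r) (x : Fin d → ℝ) (y : Y)
    (hne : ∀ h', preact θ.1 θ.2.1 x h' ≠ 0) :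
    HasFDerivAt (fun ψ : PSpace d H r => Floss f l ψ.2.2 y (reluVec ψ.1 ψ.2.1 x))
      ((fderiv ℝ (outMap f l y) (θ.2.2, reluVec θ.1 θ.2.1 x)).comp
        (((snd ℝ (Fin H → ℝ) (Fin r → ℝ)).comp
            (snd ℝ (Fin H → Fin d → ℝ) ((Fin H → ℝ) × (Fin r → ℝ)))).prod
          (ContinuousLinearMap.pi (fun h' => Dz θ x h')))) θ := by
  have hout : Differentiable ℝ (outMap f l y) := (hl y).comp hf
  have hinner : HasFDerivAt (fun ψ : PSpace d H r => (ψ.2.2, reluVec ψ.1 ψ.2.1 x))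
      (((snd ℝ (Fin H → ℝ) (Fin r → ℝ)).comp
          (snd ℝ (Fin H → Fin d → ℝ) ((Fin H → ℝ) × (Fin r → ℝ)))).prod
        (ContinuousLinearMap.pi (fun h' => Dz θ x h'))) θ :=
    HasFDerivAt.prodMk (((snd ℝ (Fin H → ℝ) (Fin r → ℝ)).comp
        (snd ℝ (Fin H → Fin d → ℝ) ((Fin H → ℝ) × (Fin r → ℝ)))).hasFDerivAt)
      (hasFDerivAt_reluVec θ x hne)
  exact ((hout _).hasFDerivAt).comp θ hinner

open ContinuousLinearMap in
lemma dFh_eq (y : Y) (φ₀ : Fin r → ℝ) (z₀ : Fin H → ℝ) (h : Fin H)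
    (hf : Differentiable ℝ (fun q : (Fin r → ℝ) × (Fin H → ℝ) => f q.1 q.2))
    (hl : ∀ y, Differentiable ℝ (fun u => l u y)) :
    dFh (Floss f l φ₀ y) z₀ h = fderiv ℝ (outMap f l y) (φ₀, z₀) (0, Pi.single h 1) := by
  have hout : Differentiable ℝ (outMap f l y) := (hl y).comp hf
  have hinc : HasFDerivAt (fun z : Fin H → ℝ => ((φ₀, z) : (Fin r → ℝ) × (Fin H → ℝ)))
      ((0 : (Fin H → ℝ) →L[ℝ] (Fin r → ℝ)).prod (ContinuousLinearMap.id ℝ (Fin H → ℝ))) z₀ :=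
    HasFDerivAt.prodMk (hasFDerivAt_const φ₀ z₀) (hasFDerivAt_id z₀)
  have hsec : HasFDerivAt (Floss f l φ₀ y)
      ((fderiv ℝ (outMap f l y) (φ₀, z₀)).comp
        ((0 : (Fin H → ℝ) →L[ℝ] (Fin r → ℝ)).prod (ContinuousLinearMap.id ℝ (Fin H → ℝ)))) z₀ :=
    ((hout _).hasFDerivAt).comp z₀ hinc
  rw [dFh, hsec.fderiv]
  simp

open ContinuousLinearMap in
lemma fderiv_batchLoss_dir_zero
    (hf : Differentiable ℝ (fun q : (Fin r → ℝ) × (Fin H → ℝ) => f q.1 q.2))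
    (hl : ∀ y, Differentiable ℝ (fun u => l u y))
    (θ : PSpace d H r) (B : Finset ((Fin d → ℝ) × Y)) (h : Fin H)
    (hnd : ∀ h' : Fin H, ∀ p ∈ B, preact θ.1 θ.2.1 p.1 h' ≠ 0)
    (hempty : activB f l θ B h = ∅)
    (u : PSpace d H r) (hu2 : u.2.2 = 0)
    (hu : ∀ h' : Fin H, h' ≠ h → u.1 h' = 0 ∧ u.2.1 h' = 0) :
    fderiv ℝ (fun ψ : PSpace d H r => batchLoss f l ψ B) θ u = 0 := by
  have hL : HasFDerivAt (fun ψ : PSpace d H r => batchLoss f l ψ B)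
      (∑ p ∈ B, (fderiv ℝ (outMap f l p.2) (θ.2.2, reluVec θ.1 θ.2.1 p.1)).comp
        (((snd ℝ (Fin H → ℝ) (Fin r → ℝ)).comp
            (snd ℝ (Fin H → Fin d → ℝ) ((Fin H → ℝ) × (Fin r → ℝ)))).prod
          (ContinuousLinearMap.pi (fun h' => Dz θ p.1 h')))) θ := by
    simp only [batchLoss]
    exact HasFDerivAt.fun_sum (fun p hp =>
      hasFDerivAt_summand f l hf hl θ p.1 p.2 (fun h' => hnd h' p hp))
  rw [hL.fderiv, ContinuousLinearMap.sum_apply]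
  apply Finset.sum_eq_zero
  intro p hp
  have hpi : (ContinuousLinearMap.pi (fun h' => Dz θ p.1 h')) u
      = Pi.single h (Dz θ p.1 h u) := by
    funext h'
    by_cases hh : h' = h
    · subst hh; simp
    · have h0 : Dz θ p.1 h' u = 0 := by
        rw [Dz]
        split
        · rw [paCLM_apply]
          simp [preact, (hu h' hh).1, (hu h' hh).2]
        · rfl
      simp [Pi.single_eq_of_ne hh, h0]
  simp only [comp_apply, prod_apply, coe_comp', Function.comp_apply, coe_snd', hu2, hpi]
  set c := Dz θ p.1 h u with hc
  have hsingle : (Pi.single h c : Fin H → ℝ) = c • (Pi.single h 1 : Fin H → ℝ) := by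
    funext h''
    by_cases hh : h'' = h
    · subst hh; simp
    · simp [Pi.single_eq_of_ne hh]
  have hpair : ((0, Pi.single h c) : (Fin r → ℝ) × (Fin H → ℝ))
      = c • ((0, Pi.single h 1) : (Fin r → ℝ) × (Fin H → ℝ)) := by
    rw [hsingle]; exact (Prod.ext (by simp) rfl)
  rw [hpair, map_smul]
  rw [← dFh_eq f l p.2 θ.2.2 (reluVec θ.1 θ.2.1 p.1) h hf hl]
  rcases (hnd h p hp).lt_or_gt with hneg | hpos
  · have : c = 0 := by rw [hc, Dz, if_neg (not_lt.2 hneg.le)]; rfl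
    rw [this, zero_smul]
  · have hd0 : dFh (Floss f l θ.2.2 p.2) (reluVec θ.1 θ.2.1 p.1) h = 0 := by
      by_contra hd
      have : p ∈ activB f l θ B h := Finset.mem_filter.2 ⟨hp, hpos, hd⟩
      rw [hempty] at this; exact absurd this (Finset.notMem_empty p)
    rw [hd0, smul_zero]

lemma grad_zero_of_empty
    (hf : Differentiable ℝ (fun q : (Fin r → ℝ) × (Fin H → ℝ) => f q.1 q.2))
    (hl : ∀ y, Differentiable ℝ (fun u => l u y))
    (θ : PSpace d H r) (B : Finset ((Fin d → ℝ) × Y)) (h : Fin H)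
    (hnd : ∀ h' : Fin H, ∀ p ∈ B, preact θ.1 θ.2.1 p.1 h' ≠ 0)
    (hempty : activB f l θ B h = ∅) :
    (gradP (fun ψ => batchLoss f l ψ B) θ).1 h = 0 ∧
    (gradP (fun ψ => batchLoss f l ψ B) θ).2.1 h = 0 := by
  constructor
  · funext j
    exact fderiv_batchLoss_dir_zero f l hf hl θ B h hnd hempty
      (Pi.single h (Pi.single j 1), 0, 0) rfl
      (fun h' hh => ⟨Pi.single_eq_of_ne hh _, rfl⟩)
  · exact fderiv_batchLoss_dir_zero f l hf hl θ B h hnd hempty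
      (0, Pi.single h 1, 0) rfl
      (fun h' hh => ⟨rfl, Pi.single_eq_of_ne hh _⟩)

end Aux

theorem stmt9 {d H r C K : ℕ} {Y : Type*} (hK : 0 < K)
    (f : (Fin r → ℝ) → (Fin H → ℝ) → Fin C → ℝ)
    (l : (Fin C → ℝ) → Y → ℝ)
    (hf : Differentiable ℝ (fun q : (Fin r → ℝ) × (Fin H → ℝ) => f q.1 q.2))
    (hl : ∀ y, Differentiable ℝ (fun u => l u y))
    (n : ℕ) (η : ℝ) (hη : 0 < η)
    (θprev : (Fin H → Fin d → ℝ) × (Fin H → ℝ) × (Fin r → ℝ))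
    (D : Fin K → Finset ((Fin d → ℝ) × Y))
    (Bt : Fin K → ℕ → Finset ((Fin d → ℝ) × Y))
    (θ : Fin K → ℕ → ((Fin H → Fin d → ℝ) × (Fin H → ℝ) × (Fin r → ℝ)))
    (hBD : ∀ k, ∀ i < n, Bt k i ⊆ D k)
    (hinit : ∀ k, θ k 0 = θprev)
    (hstep : ∀ k, ∀ i < n,
      θ k (i + 1) = θ k i - η • gradP (fun ψ => batchLoss f l ψ (Bt k i)) (θ k i))
    (hnd : ∀ k, ∀ i < n, ∀ h' : Fin H, ∀ p ∈ Bt k i,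
      preact (θ k i).1 (θ k i).2.1 p.1 h' ≠ 0)
    (hunique : ∀ k₁ k₂ : Fin K, ∀ p₁ ∈ D k₁, ∀ p₂ ∈ D k₂, p₁.1 = p₂.1 → k₁ = k₂ ∧ p₁ = p₂)
    (h : Fin H) (k : Fin K) (x' : Fin d → ℝ)
    (hsingle : {x0 | x0 ∈ roundActiv f l n θ Bt h ∧
        0 < preact θprev.1 θprev.2.1 x0 h} = {x'})
    (hx'k : ∃ y', (x', y') ∈ D k) :
    ∀ x ∈ roundActiv f l n θ Bt h, ∃ y, (x, y) ∈ D k := by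
  intro x hx
  obtain ⟨k', i, hi, y, hmem⟩ := hx
  classical
  have hSne : ∃ j, j < n ∧ (activB f l (θ k' j) (Bt k' j) h).Nonempty :=
    ⟨i, hi, ⟨(x, y), hmem⟩⟩
  set i₀ := Nat.find hSne with hi₀def
  have hi₀ := Nat.find_spec hSne
  have hmin : ∀ j < i₀, activB f l (θ k' j) (Bt k' j) h = ∅ := by
    intro j hj
    have hnot := Nat.find_min hSne hj
    have hjn : j < n := hj.trans hi₀.1
    rw [← Finset.not_nonempty_iff_eq_empty]
    exact fun hne => hnot ⟨hjn, hne⟩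
  have hrow : ∀ j ≤ i₀, (θ k' j).1 h = θprev.1 h ∧ (θ k' j).2.1 h = θprev.2.1 h := by
    intro j
    induction j with
    | zero => intro _; rw [hinit]; exact ⟨rfl, rfl⟩
    | succ j ih =>
      intro hj
      have hj' : j < i₀ := Nat.lt_of_succ_le hj
      obtain ⟨hW, hb⟩ := ih hj'.le
      have hjn : j < n := hj'.trans hi₀.1
      have hg := grad_zero_of_empty f l hf hl (θ k' j) (Bt k' j) h
        (fun h' p hp => hnd k' j hjn h' p hp) (hmin j hj')
      rw [hstep k' j hjn]
      set G := gradP (fun ψ => batchLoss f l ψ (Bt k' j)) (θ k' j) with hG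
      constructor
      · have h1 : (θ k' j - η • G).1 h = (θ k' j).1 h - η • (G.1 h) := rfl
        rw [h1, hg.1, smul_zero, sub_zero, hW]
      · have h2 : (θ k' j - η • G).2.1 h = (θ k' j).2.1 h - η • (G.2.1 h) := rfl
        rw [h2, hg.2, smul_zero, sub_zero, hb]
  obtain ⟨p, hp⟩ := hi₀.2
  have hpmem := Finset.mem_filter.1 hp
  have hpos : 0 < preact (θ k' i₀).1 (θ k' i₀).2.1 p.1 h := hpmem.2.1
  obtain ⟨hW0, hb0⟩ := hrow i₀ le_rfl
  have hpos' : 0 < preact θprev.1 θprev.2.1 p.1 h := by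
    have heq : preact (θ k' i₀).1 (θ k' i₀).2.1 p.1 h
        = preact θprev.1 θprev.2.1 p.1 h := by
      simp [preact, hW0, hb0]
    rwa [heq] at hpos
  have hpround : p.1 ∈ roundActiv f l n θ Bt h :=
    ⟨k', i₀, hi₀.1, p.2, by simpa using hp⟩
  have hpx : p.1 = x' := by
    have hmem' : p.1 ∈ ({x0 | x0 ∈ roundActiv f l n θ Bt h ∧
        0 < preact θprev.1 θprev.2.1 x0 h}) := ⟨hpround, hpos'⟩
    rw [hsingle] at hmem'
    exact hmem'
  obtain ⟨y', hy'⟩ := hx'k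
  have hpD : p ∈ D k' := hBD k' i₀ hi₀.1 (Finset.mem_of_mem_filter p hp)
  have hkk : k' = k := (hunique k' k p hpD (x', y') hy' hpx).1
  have hxD : (x, y) ∈ D k' := hBD k' i hi (Finset.mem_of_mem_filter _ hmem)
  exact ⟨y, hkk ▸ hxD⟩
end
end

section
/- In the FedAvg setup with uniqueness of samples, fix a neuron h and a round t, and define Ã^h_{t,0} = { x ∈ A^h_t : W^h_{t−1} · x + b^h_{t−1} > 0 }. If every sample in Ã^h_{t,0} belongs to client k (i.e., for every x' ∈ Ã^h_{t,0} there is a label y' with (x', y') ∈ D_k), then every sample in the round-level activation set A^h_t belongs to client k. -/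
noncomputable section

namespace Aux

open Filter Topology

variable {d H r C : ℕ} {Y : Type*}

abbrev Pm (d H r : ℕ) : Type := (Fin H → Fin d → ℝ) × (Fin H → ℝ) × (Fin r → ℝ)

def preactL (x : Fin d → ℝ) (h' : Fin H) : Pm d H r →ₗ[ℝ] ℝ where
  toFun ψ := (∑ j, ψ.1 h' j * x j) + ψ.2.1 h'
  map_add' ψ χ := by
    simp only [Prod.fst_add, Prod.snd_add, Pi.add_apply, add_mul, Finset.sum_add_distrib]
    ring
  map_smul' c ψ := by
    simp only [Prod.smul_fst, Prod.smul_snd, Pi.smul_apply, smul_eq_mul, RingHom.id_apply,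
      Finset.mul_sum, mul_add, mul_assoc]

def preactC (x : Fin d → ℝ) (h' : Fin H) : Pm d H r →L[ℝ] ℝ :=
  LinearMap.toContinuousLinearMap (preactL x h')

lemma preactC_apply (x : Fin d → ℝ) (h' : Fin H) (ψ : Pm d H r) :
    preactC x h' ψ = preact ψ.1 ψ.2.1 x h' := rfl

lemma hasFDerivAt_preact (x : Fin d → ℝ) (h' : Fin H) (θ₀ : Pm d H r) :
    HasFDerivAt (fun ψ : Pm d H r => preact ψ.1 ψ.2.1 x h') (preactC x h') θ₀ :=
  (preactC x h').hasFDerivAt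


def gp (x : Fin d → ℝ) (θ₀ : Pm d H r) (ψ : Pm d H r) : Fin H → ℝ :=
  fun h' => if 0 < preact θ₀.1 θ₀.2.1 x h' then preact ψ.1 ψ.2.1 x h' else 0

def GC (x : Fin d → ℝ) (θ₀ : Pm d H r) : Pm d H r →L[ℝ] (Fin H → ℝ) :=
  ContinuousLinearMap.pi fun h' =>
    if 0 < preact θ₀.1 θ₀.2.1 x h' then preactC x h' else 0

lemma hasFDerivAt_gp (x : Fin d → ℝ) (θ₀ : Pm d H r) :
    HasFDerivAt (gp x θ₀) (GC x θ₀) θ₀ := by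
  have : ∀ h', HasFDerivAt (fun ψ : Pm d H r => gp x θ₀ ψ h')
      (if 0 < preact θ₀.1 θ₀.2.1 x h' then preactC x h' else (0 : Pm d H r →L[ℝ] ℝ)) θ₀ := by
    intro h'
    by_cases hc : 0 < preact θ₀.1 θ₀.2.1 x h'
    · simp only [gp, hc, if_true]
      exact hasFDerivAt_preact x h' θ₀
    · simp only [gp, hc, if_false]
      exact hasFDerivAt_const 0 θ₀
  exact hasFDerivAt_pi.2 this

lemma gp_self (x : Fin d → ℝ) (θ₀ : Pm d H r)
    (hne : ∀ h', preact θ₀.1 θ₀.2.1 x h' ≠ 0) :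
    gp x θ₀ θ₀ = reluVec θ₀.1 θ₀.2.1 x := by
  funext h'
  by_cases hc : 0 < preact θ₀.1 θ₀.2.1 x h'
  · simp [gp, reluVec, hc, max_eq_left hc.le]
  · have hlt : preact θ₀.1 θ₀.2.1 x h' < 0 := lt_of_le_of_ne (not_lt.1 hc) (hne h')
    simp [gp, reluVec, hc, max_eq_right hlt.le]

lemma relu_eventuallyEq (x : Fin d → ℝ) (θ₀ : Pm d H r)
    (hne : ∀ h', preact θ₀.1 θ₀.2.1 x h' ≠ 0) :
    (fun ψ : Pm d H r => reluVec ψ.1 ψ.2.1 x) =ᶠ[𝓝 θ₀] gp x θ₀ := by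
  have h1 : ∀ h', ∀ᶠ ψ : Pm d H r in 𝓝 θ₀, reluVec ψ.1 ψ.2.1 x h' = gp x θ₀ ψ h' := by
    intro h'
    have hcont : ContinuousAt (fun ψ : Pm d H r => preact ψ.1 ψ.2.1 x h') θ₀ :=
      (hasFDerivAt_preact x h' θ₀).continuousAt
    rcases (hne h').lt_or_gt with hlt | hgt
    · filter_upwards [hcont.eventually_lt_const hlt] with ψ hψ
      have hnc : ¬ 0 < preact θ₀.1 θ₀.2.1 x h' := not_lt.2 hlt.le
      simp [reluVec, gp, hnc, max_eq_right hψ.le]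
    · filter_upwards [hcont.eventually_const_lt hgt] with ψ hψ
      simp [reluVec, gp, hgt, max_eq_left hψ.le]
  exact (eventually_all.2 h1).mono fun ψ hψ => funext hψ


def Qc (x : Fin d → ℝ) (θ₀ : Pm d H r) : Pm d H r →L[ℝ] ((Fin r → ℝ) × (Fin H → ℝ)) :=
  ((ContinuousLinearMap.snd ℝ (Fin H → ℝ) (Fin r → ℝ)).comp
    (ContinuousLinearMap.snd ℝ (Fin H → Fin d → ℝ) ((Fin H → ℝ) × (Fin r → ℝ)))).prod (GC x θ₀)

def Dterm (f : (Fin r → ℝ) → (Fin H → ℝ) → Fin C → ℝ) (l : (Fin C → ℝ) → Y → ℝ)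
    (y : Y) (x : Fin d → ℝ) (θ₀ : Pm d H r) : Pm d H r →L[ℝ] ℝ :=
  (fderiv ℝ (fun u => l u y) (f θ₀.2.2 (reluVec θ₀.1 θ₀.2.1 x))).comp
    ((fderiv ℝ (fun q : (Fin r → ℝ) × (Fin H → ℝ) => f q.1 q.2)
        (θ₀.2.2, reluVec θ₀.1 θ₀.2.1 x)).comp (Qc x θ₀))

lemma term_hasFDerivAt (f : (Fin r → ℝ) → (Fin H → ℝ) → Fin C → ℝ)
    (hf : Differentiable ℝ (fun q : (Fin r → ℝ) × (Fin H → ℝ) => f q.1 q.2))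
    (l : (Fin C → ℝ) → Y → ℝ) (hl : ∀ y, Differentiable ℝ (fun u => l u y))
    (y : Y) (x : Fin d → ℝ) (θ₀ : Pm d H r)
    (hne : ∀ h', preact θ₀.1 θ₀.2.1 x h' ≠ 0) :
    HasFDerivAt (fun ψ : Pm d H r => Floss f l ψ.2.2 y (reluVec ψ.1 ψ.2.1 x))
      (Dterm f l y x θ₀) θ₀ := by
  have hsnd : HasFDerivAt (fun ψ : Pm d H r => ψ.2.2)
      ((ContinuousLinearMap.snd ℝ (Fin H → ℝ) (Fin r → ℝ)).comp
        (ContinuousLinearMap.snd ℝ (Fin H → Fin d → ℝ) ((Fin H → ℝ) × (Fin r → ℝ)))) θ₀ :=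
    ((ContinuousLinearMap.snd ℝ (Fin H → ℝ) (Fin r → ℝ)).comp
      (ContinuousLinearMap.snd ℝ (Fin H → Fin d → ℝ) ((Fin H → ℝ) × (Fin r → ℝ)))).hasFDerivAt
  have hq : HasFDerivAt (fun ψ : Pm d H r => (ψ.2.2, gp x θ₀ ψ)) (Qc x θ₀) θ₀ :=
    hsnd.prodMk (hasFDerivAt_gp x θ₀)
  have hfd : HasFDerivAt (fun q : (Fin r → ℝ) × (Fin H → ℝ) => f q.1 q.2)
      (fderiv ℝ (fun q : (Fin r → ℝ) × (Fin H → ℝ) => f q.1 q.2)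
        (θ₀.2.2, reluVec θ₀.1 θ₀.2.1 x)) (θ₀.2.2, gp x θ₀ θ₀) := by
    rw [gp_self x θ₀ hne]
    exact (hf _).hasFDerivAt
  have hcomp1 := hfd.comp θ₀ hq
  have hld : HasFDerivAt (fun u => l u y)
      (fderiv ℝ (fun u => l u y) (f θ₀.2.2 (reluVec θ₀.1 θ₀.2.1 x)))
      (f (θ₀.2.2, gp x θ₀ θ₀).1 (θ₀.2.2, gp x θ₀ θ₀).2) := by
    rw [gp_self x θ₀ hne]
    exact ((hl y) _).hasFDerivAt
  have hcomp2 := hld.comp θ₀ hcomp1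
  refine hcomp2.congr_of_eventuallyEq ?_
  filter_upwards [relu_eventuallyEq x θ₀ hne] with ψ hψ
  simp only [Function.comp, Floss, hψ]

lemma partial_fderiv (f : (Fin r → ℝ) → (Fin H → ℝ) → Fin C → ℝ)
    (hf : Differentiable ℝ (fun q : (Fin r → ℝ) × (Fin H → ℝ) => f q.1 q.2))
    (l : (Fin C → ℝ) → Y → ℝ) (hl : ∀ y, Differentiable ℝ (fun u => l u y))
    (y : Y) (φ₀ : Fin r → ℝ) (z₀ w : Fin H → ℝ) :
    fderiv ℝ (fun u => l u y) (f φ₀ z₀)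
      (fderiv ℝ (fun q : (Fin r → ℝ) × (Fin H → ℝ) => f q.1 q.2) (φ₀, z₀) (0, w))
      = fderiv ℝ (Floss f l φ₀ y) z₀ w := by
  have h1 : HasFDerivAt (fun z : Fin H → ℝ => f φ₀ z)
      ((fderiv ℝ (fun q : (Fin r → ℝ) × (Fin H → ℝ) => f q.1 q.2) (φ₀, z₀)).comp
        (ContinuousLinearMap.inr ℝ (Fin r → ℝ) (Fin H → ℝ))) z₀ :=
    (hf (φ₀, z₀)).hasFDerivAt.comp z₀ (hasFDerivAt_prodMk_right φ₀ z₀)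
  have h2 : HasFDerivAt (Floss f l φ₀ y)
      ((fderiv ℝ (fun u => l u y) (f φ₀ z₀)).comp
        ((fderiv ℝ (fun q : (Fin r → ℝ) × (Fin H → ℝ) => f q.1 q.2) (φ₀, z₀)).comp
          (ContinuousLinearMap.inr ℝ (Fin r → ℝ) (Fin H → ℝ)))) z₀ :=
    ((hl y) (f φ₀ z₀)).hasFDerivAt.comp z₀ h1
  rw [h2.fderiv]
  rfl


lemma GC_W (x : Fin d → ℝ) (θ₀ : Pm d H r) (h : Fin H) (j : Fin d) :
    GC x θ₀ ((Pi.single h (Pi.single j 1), 0, 0) : Pm d H r)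
      = (if 0 < preact θ₀.1 θ₀.2.1 x h then x j else 0) • (Pi.single h 1 : Fin H → ℝ) := by
  funext h'
  simp only [GC, ContinuousLinearMap.pi_apply, Pi.smul_apply, smul_eq_mul]
  by_cases hh : h' = h
  · subst hh
    have hval : preactC (r := r) x h'
        ((Pi.single h' (Pi.single j 1), (0 : Fin H → ℝ), (0 : Fin r → ℝ)) : Pm d H r) = x j := by
      rw [preactC_apply]
      simp [preact, Pi.single_apply, ite_mul, one_mul, zero_mul]
    by_cases hc : 0 < preact θ₀.1 θ₀.2.1 x h' <;>
      simp [hc, hval]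
  · have hval : preactC (r := r) x h'
        ((Pi.single h (Pi.single j 1), (0 : Fin H → ℝ), (0 : Fin r → ℝ)) : Pm d H r) = 0 := by
      rw [preactC_apply]
      simp [preact, Pi.single_eq_of_ne hh]
    by_cases hc : 0 < preact θ₀.1 θ₀.2.1 x h' <;>
      simp [hc, hval, Pi.single_eq_of_ne hh]

lemma GC_b (x : Fin d → ℝ) (θ₀ : Pm d H r) (h : Fin H) :
    GC x θ₀ ((0, Pi.single h 1, 0) : Pm d H r)
      = (if 0 < preact θ₀.1 θ₀.2.1 x h then (1 : ℝ) else 0) • (Pi.single h 1 : Fin H → ℝ) := by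
  funext h'
  simp only [GC, ContinuousLinearMap.pi_apply, Pi.smul_apply, smul_eq_mul]
  have hval : preactC (r := r) x h' ((0, Pi.single h 1, 0) : Pm d H r)
      = (Pi.single h 1 : Fin H → ℝ) h' := by
    rw [preactC_apply]
    simp [preact]
  by_cases hh : h' = h
  · subst hh
    by_cases hc : 0 < preact θ₀.1 θ₀.2.1 x h' <;> simp [hc, hval]
  · by_cases hc : 0 < preact θ₀.1 θ₀.2.1 x h' <;>
      simp [hc, hval, Pi.single_eq_of_ne hh]

lemma Dterm_W (f : (Fin r → ℝ) → (Fin H → ℝ) → Fin C → ℝ)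
    (hf : Differentiable ℝ (fun q : (Fin r → ℝ) × (Fin H → ℝ) => f q.1 q.2))
    (l : (Fin C → ℝ) → Y → ℝ) (hl : ∀ y, Differentiable ℝ (fun u => l u y))
    (y : Y) (x : Fin d → ℝ) (θ₀ : Pm d H r) (h : Fin H) (j : Fin d) :
    Dterm f l y x θ₀ ((Pi.single h (Pi.single j 1), 0, 0) : Pm d H r)
      = if 0 < preact θ₀.1 θ₀.2.1 x h then
          x j * dFh (Floss f l θ₀.2.2 y) (reluVec θ₀.1 θ₀.2.1 x) h else 0 := by
  have hQ : Qc x θ₀ ((Pi.single h (Pi.single j 1), 0, 0) : Pm d H r)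
      = ((0 : Fin r → ℝ), GC x θ₀ ((Pi.single h (Pi.single j 1), 0, 0) : Pm d H r)) := rfl
  simp only [Dterm, ContinuousLinearMap.comp_apply, hQ, GC_W]
  have hsm : ((0 : Fin r → ℝ),
        (if 0 < preact θ₀.1 θ₀.2.1 x h then x j else 0) • (Pi.single h 1 : Fin H → ℝ))
      = (if 0 < preact θ₀.1 θ₀.2.1 x h then x j else 0) •
        ((0 : Fin r → ℝ), (Pi.single h 1 : Fin H → ℝ)) := by
    split_ifs <;> simp [Prod.smul_mk]
  rw [hsm, map_smul, map_smul, smul_eq_mul,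
    partial_fderiv f hf l hl y θ₀.2.2 (reluVec θ₀.1 θ₀.2.1 x) (Pi.single h 1)]
  rw [show dFh (Floss f l θ₀.2.2 y) (reluVec θ₀.1 θ₀.2.1 x) h
      = fderiv ℝ (Floss f l θ₀.2.2 y) (reluVec θ₀.1 θ₀.2.1 x) (Pi.single h 1) from rfl]
  split_ifs with hc
  · rfl
  · exact zero_mul _

lemma Dterm_b (f : (Fin r → ℝ) → (Fin H → ℝ) → Fin C → ℝ)
    (hf : Differentiable ℝ (fun q : (Fin r → ℝ) × (Fin H → ℝ) => f q.1 q.2))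
    (l : (Fin C → ℝ) → Y → ℝ) (hl : ∀ y, Differentiable ℝ (fun u => l u y))
    (y : Y) (x : Fin d → ℝ) (θ₀ : Pm d H r) (h : Fin H) :
    Dterm f l y x θ₀ ((0, Pi.single h 1, 0) : Pm d H r)
      = if 0 < preact θ₀.1 θ₀.2.1 x h then
          dFh (Floss f l θ₀.2.2 y) (reluVec θ₀.1 θ₀.2.1 x) h else 0 := by
  have hQ : Qc x θ₀ ((0, Pi.single h 1, 0) : Pm d H r)
      = ((0 : Fin r → ℝ), GC x θ₀ ((0, Pi.single h 1, 0) : Pm d H r)) := rfl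
  simp only [Dterm, ContinuousLinearMap.comp_apply, hQ, GC_b]
  have hsm : ((0 : Fin r → ℝ),
        (if 0 < preact θ₀.1 θ₀.2.1 x h then (1:ℝ) else 0) • (Pi.single h 1 : Fin H → ℝ))
      = (if 0 < preact θ₀.1 θ₀.2.1 x h then (1:ℝ) else 0) •
        ((0 : Fin r → ℝ), (Pi.single h 1 : Fin H → ℝ)) := by
    split_ifs <;> simp [Prod.smul_mk]
  rw [hsm, map_smul, map_smul, smul_eq_mul,
    partial_fderiv f hf l hl y θ₀.2.2 (reluVec θ₀.1 θ₀.2.1 x) (Pi.single h 1)]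
  rw [show dFh (Floss f l θ₀.2.2 y) (reluVec θ₀.1 θ₀.2.1 x) h
      = fderiv ℝ (Floss f l θ₀.2.2 y) (reluVec θ₀.1 θ₀.2.1 x) (Pi.single h 1) from rfl]
  split_ifs with hc
  · exact one_mul _
  · exact zero_mul _


lemma batch_hasFDerivAt (f : (Fin r → ℝ) → (Fin H → ℝ) → Fin C → ℝ)
    (hf : Differentiable ℝ (fun q : (Fin r → ℝ) × (Fin H → ℝ) => f q.1 q.2))
    (l : (Fin C → ℝ) → Y → ℝ) (hl : ∀ y, Differentiable ℝ (fun u => l u y))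
    (B : Finset ((Fin d → ℝ) × Y)) (θ₀ : Pm d H r)
    (hne : ∀ h' : Fin H, ∀ p ∈ B, preact θ₀.1 θ₀.2.1 p.1 h' ≠ 0) :
    HasFDerivAt (fun ψ : Pm d H r => batchLoss f l ψ B)
      (∑ p ∈ B, Dterm f l p.2 p.1 θ₀) θ₀ :=
  HasFDerivAt.fun_sum fun p hp =>
    term_hasFDerivAt f hf l hl p.2 p.1 θ₀ (fun h' => hne h' p hp)

lemma grad_rows_zero (f : (Fin r → ℝ) → (Fin H → ℝ) → Fin C → ℝ)
    (hf : Differentiable ℝ (fun q : (Fin r → ℝ) × (Fin H → ℝ) => f q.1 q.2))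
    (l : (Fin C → ℝ) → Y → ℝ) (hl : ∀ y, Differentiable ℝ (fun u => l u y))
    (B : Finset ((Fin d → ℝ) × Y)) (θ₀ : Pm d H r)
    (hne : ∀ h' : Fin H, ∀ p ∈ B, preact θ₀.1 θ₀.2.1 p.1 h' ≠ 0)
    (h : Fin H) (hempty : activB f l θ₀ B h = ∅) :
    (gradP (fun ψ => batchLoss f l ψ B) θ₀).1 h = 0 ∧
    (gradP (fun ψ => batchLoss f l ψ B) θ₀).2.1 h = 0 := by
  have hfe : fderiv ℝ (fun ψ : Pm d H r => batchLoss f l ψ B) θ₀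
      = ∑ p ∈ B, Dterm f l p.2 p.1 θ₀ :=
    (batch_hasFDerivAt f hf l hl B θ₀ hne).fderiv
  have hz : ∀ p ∈ B, 0 < preact θ₀.1 θ₀.2.1 p.1 h →
      dFh (Floss f l θ₀.2.2 p.2) (reluVec θ₀.1 θ₀.2.1 p.1) h = 0 := by
    intro p hp hpos
    by_contra hd
    have : p ∈ activB f l θ₀ B h := Finset.mem_filter.2 ⟨hp, hpos, hd⟩
    rw [hempty] at this
    exact absurd this (Finset.notMem_empty p)
  constructor
  · funext j
    show fderiv ℝ (fun ψ : Pm d H r => batchLoss f l ψ B) θ₀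
      ((Pi.single h (Pi.single j 1), 0, 0) : Pm d H r) = 0
    rw [hfe, ContinuousLinearMap.sum_apply]
    apply Finset.sum_eq_zero
    intro p hp
    rw [Dterm_W f hf l hl p.2 p.1 θ₀ h j]
    split_ifs with hc
    · rw [hz p hp hc, mul_zero]
    · rfl
  · show fderiv ℝ (fun ψ : Pm d H r => batchLoss f l ψ B) θ₀
      ((0, Pi.single h 1, 0) : Pm d H r) = 0
    rw [hfe, ContinuousLinearMap.sum_apply]
    apply Finset.sum_eq_zero
    intro p hp
    rw [Dterm_b f hf l hl p.2 p.1 θ₀ h]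
    split_ifs with hc
    · exact hz p hp hc
    · rfl

end Aux

theorem stmt10 {d H r C K : ℕ} {Y : Type*} (hK : 0 < K)
    (f : (Fin r → ℝ) → (Fin H → ℝ) → Fin C → ℝ)
    (l : (Fin C → ℝ) → Y → ℝ)
    (hf : Differentiable ℝ (fun q : (Fin r → ℝ) × (Fin H → ℝ) => f q.1 q.2))
    (hl : ∀ y, Differentiable ℝ (fun u => l u y))
    (n : ℕ) (η : ℝ) (hη : 0 < η)
    (θprev : (Fin H → Fin d → ℝ) × (Fin H → ℝ) × (Fin r → ℝ))
    (D : Fin K → Finset ((Fin d → ℝ) × Y))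
    (Bt : Fin K → ℕ → Finset ((Fin d → ℝ) × Y))
    (θ : Fin K → ℕ → ((Fin H → Fin d → ℝ) × (Fin H → ℝ) × (Fin r → ℝ)))
    (hBD : ∀ k, ∀ i < n, Bt k i ⊆ D k)
    (hinit : ∀ k, θ k 0 = θprev)
    (hstep : ∀ k, ∀ i < n,
      θ k (i + 1) = θ k i - η • gradP (fun ψ => batchLoss f l ψ (Bt k i)) (θ k i))
    (hnd : ∀ k, ∀ i < n, ∀ h' : Fin H, ∀ p ∈ Bt k i,
      preact (θ k i).1 (θ k i).2.1 p.1 h' ≠ 0)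
    (hunique : ∀ k₁ k₂ : Fin K, ∀ p₁ ∈ D k₁, ∀ p₂ ∈ D k₂, p₁.1 = p₂.1 → k₁ = k₂ ∧ p₁ = p₂)
    (h : Fin H) (k : Fin K)
    (hall : ∀ x' ∈ roundActiv f l n θ Bt h,
      0 < preact θprev.1 θprev.2.1 x' h → ∃ y', (x', y') ∈ D k) :
    ∀ x ∈ roundActiv f l n θ Bt h, ∃ y, (x, y) ∈ D k := by
    classical
  have hrow : ∀ k' : Fin K, ∀ i, i ≤ n →
      (∀ j, j < i → activB f l (θ k' j) (Bt k' j) h = ∅) →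
      (θ k' i).1 h = θprev.1 h ∧ (θ k' i).2.1 h = θprev.2.1 h := by
    intro k' i
    induction i with
    | zero => intro _ _; rw [hinit k']; exact ⟨rfl, rfl⟩
    | succ i ih =>
      intro hin hact
      have hi : i < n := lt_of_lt_of_le (Nat.lt_succ_self i) hin
      have hIH := ih (le_of_lt hi) (fun j hj => hact j (Nat.lt_succ_of_lt hj))
      have hzero := Aux.grad_rows_zero f hf l hl (Bt k' i) (θ k' i)
        (fun h' p hp => hnd k' i hi h' p hp) h (hact i (Nat.lt_succ_self i))
      rw [hstep k' i hi]
      constructor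
      · show ((θ k' i - η • gradP (fun ψ => batchLoss f l ψ (Bt k' i)) (θ k' i))).1 h
          = θprev.1 h
        simp only [Prod.fst_sub, Prod.smul_fst, Pi.sub_apply, Pi.smul_apply, hzero.1,
          smul_zero, sub_zero]
        exact hIH.1
      · show ((θ k' i - η • gradP (fun ψ => batchLoss f l ψ (Bt k' i)) (θ k' i))).2.1 h
          = θprev.2.1 h
        simp only [Prod.snd_sub, Prod.smul_snd, Prod.fst_sub, Prod.smul_fst,
          Pi.sub_apply, Pi.smul_apply, hzero.2, smul_zero, sub_zero]
        exact hIH.2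
  intro x hx
  obtain ⟨k', i, hi, y, hmem⟩ := hx
  have hex : ∃ m, m < n ∧ (activB f l (θ k' m) (Bt k' m) h).Nonempty :=
    ⟨i, hi, ⟨(x, y), hmem⟩⟩
  obtain ⟨hi0n, p, hp⟩ := Nat.find_spec hex
  set i₀ := Nat.find hex with hi₀
  have hmin : ∀ j, j < i₀ → activB f l (θ k' j) (Bt k' j) h = ∅ := by
    intro j hj
    by_contra hne'
    exact Nat.find_min hex hj ⟨lt_trans hj hi0n, Finset.nonempty_of_ne_empty hne'⟩
  have hrows := hrow k' i₀ (le_of_lt hi0n) hmin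
  obtain ⟨hpB, hpre, hd⟩ := Finset.mem_filter.1 hp
  have hpre' : 0 < preact θprev.1 θprev.2.1 p.1 h := by
    have heqp : preact (θ k' i₀).1 (θ k' i₀).2.1 p.1 h = preact θprev.1 θprev.2.1 p.1 h := by
      simp only [preact, hrows.1, hrows.2]
    rwa [heqp] at hpre
  have hpr : p.1 ∈ roundActiv f l n θ Bt h :=
    ⟨k', i₀, hi0n, p.2, by rw [Prod.mk.eta]; exact hp⟩
  obtain ⟨y', hy'⟩ := hall p.1 hpr hpre'
  have hpDk' : p ∈ D k' := hBD k' i₀ hi0n hpB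
  have hkk : k' = k := (hunique k' k p hpDk' (p.1, y') hy' rfl).1
  refine ⟨y, ?_⟩
  have hxD : (x, y) ∈ D k' := hBD k' i hi (Finset.mem_filter.1 hmem).1
  rwa [hkk] at hxD
end
end

section
/- In the FedAvg setup, fix a round t, a client k, and a neuron h, and suppose some batch-level activation set of client k at round t is nonempty. Let i_k = min { i ∈ {0,…,n−1} : A^h(θ_{t,k,i}, B_{t,k,i}) ≠ ∅ } be the first local update at which a sample of client k activates neuron h. Then every sample x' ∈ A^h(θ_{t,k,i_k}, B_{t,k,i_k}) satisfies W^h_{t−1} · x' + b^h_{t−1} > 0; that is, the first activating samples of each client activate neuron h already with respect to the shared extended weights (W^h_{t−1}, b^h_{t−1}) at the start of the round, and hence belong to Ã^h_{t,0} = { x ∈ A^h_t : W^h_{t−1} · x + b^h_{t−1} > 0 }. -/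
noncomputable section

namespace Stmt14Aux

abbrev P (d H r : ℕ) := (Fin H → Fin d → ℝ) × (Fin H → ℝ) × (Fin r → ℝ)

def preactCLM (d H r : ℕ) (x : Fin d → ℝ) (h' : Fin H) : P d H r →L[ℝ] ℝ :=
  LinearMap.toContinuousLinearMap
  { toFun := fun ψ => (∑ j, ψ.1 h' j * x j) + ψ.2.1 h'
    map_add' := by
      intro a b
      simp [add_mul, Finset.sum_add_distrib]
      ring
    map_smul' := by
      intro c a
      simp [Finset.mul_sum, mul_add, mul_assoc] }

lemma preactCLM_apply {d H r : ℕ} (x : Fin d → ℝ) (h' : Fin H) (ψ : P d H r) :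
    preactCLM d H r x h' ψ = preact ψ.1 ψ.2.1 x h' := rfl

open Classical in
def sgnCLM {d H r : ℕ} (x : Fin d → ℝ) (θ0 : P d H r) : P d H r →L[ℝ] (Fin H → ℝ) :=
  ContinuousLinearMap.pi fun h' =>
    if 0 < preact θ0.1 θ0.2.1 x h' then preactCLM d H r x h' else 0


lemma hasFDerivAt_reluVec {d H r : ℕ} (x : Fin d → ℝ) (θ0 : P d H r)
    (hnd : ∀ h', preact θ0.1 θ0.2.1 x h' ≠ 0) :
    HasFDerivAt (fun ψ : P d H r => reluVec ψ.1 ψ.2.1 x) (sgnCLM x θ0) θ0 := by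
  classical
  have key : ∀ h' : Fin H, ∀ᶠ ψ : P d H r in nhds θ0,
      reluVec ψ.1 ψ.2.1 x h' = sgnCLM x θ0 ψ h' := by
    intro h'
    have hc : ContinuousAt (fun ψ : P d H r => preactCLM d H r x h' ψ) θ0 :=
      (preactCLM d H r x h').continuous.continuousAt
    rcases (hnd h').lt_or_gt with hneg | hpos
    · have hev : ∀ᶠ ψ : P d H r in nhds θ0, preactCLM d H r x h' ψ < 0 :=
        hc.eventually_lt continuousAt_const (by simpa [preactCLM_apply] using hneg)
      filter_upwards [hev] with ψ hψ
      rw [preactCLM_apply] at hψ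
      simp [reluVec, sgnCLM, ContinuousLinearMap.pi_apply, if_neg (not_lt.2 hneg.le),
        max_eq_right hψ.le]
    · have hev : ∀ᶠ ψ : P d H r in nhds θ0, 0 < preactCLM d H r x h' ψ :=
        continuousAt_const.eventually_lt hc (by simpa [preactCLM_apply] using hpos)
      filter_upwards [hev] with ψ hψ
      rw [preactCLM_apply] at hψ
      simp [reluVec, sgnCLM, ContinuousLinearMap.pi_apply, if_pos hpos,
        max_eq_left hψ.le, preactCLM_apply]
  have hev : (fun ψ : P d H r => reluVec ψ.1 ψ.2.1 x) =ᶠ[nhds θ0]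
      (fun ψ => sgnCLM x θ0 ψ) := by
    have := Filter.eventually_all.2 key
    filter_upwards [this] with ψ hψ
    funext h'
    exact hψ h'
  exact ((sgnCLM x θ0).hasFDerivAt).congr_of_eventuallyEq hev


variable {d H r C : ℕ} {Y : Type*}

lemma fderiv_batchLoss_dir
    (f : (Fin r → ℝ) → (Fin H → ℝ) → Fin C → ℝ)
    (l : (Fin C → ℝ) → Y → ℝ)
    (hf : Differentiable ℝ (fun q : (Fin r → ℝ) × (Fin H → ℝ) => f q.1 q.2))
    (hl : ∀ y, Differentiable ℝ (fun u => l u y))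
    (B : Finset ((Fin d → ℝ) × Y)) (θ0 : P d H r) (h : Fin H)
    (hnd : ∀ p ∈ B, ∀ h', preact θ0.1 θ0.2.1 p.1 h' ≠ 0)
    (hact : ∀ p ∈ B, 0 < preact θ0.1 θ0.2.1 p.1 h →
      dFh (Floss f l θ0.2.2 p.2) (reluVec θ0.1 θ0.2.1 p.1) h = 0)
    (u : P d H r) (hu1 : ∀ h', h' ≠ h → u.1 h' = 0)
    (hu2 : ∀ h', h' ≠ h → u.2.1 h' = 0) (hu3 : u.2.2 = 0) :
    fderiv ℝ (fun ψ : P d H r => batchLoss f l ψ B) θ0 u = 0 := by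
  classical
  -- the third-coordinate projection as a CLM
  set pr3 : P d H r →L[ℝ] (Fin r → ℝ) :=
    (ContinuousLinearMap.snd ℝ (Fin H → ℝ) (Fin r → ℝ)).comp
      (ContinuousLinearMap.snd ℝ (Fin H → Fin d → ℝ) ((Fin H → ℝ) × (Fin r → ℝ))) with hpr3
  -- per-sample derivative
  have main : ∀ p ∈ B,
      HasFDerivAt (fun ψ : P d H r => Floss f l ψ.2.2 p.2 (reluVec ψ.1 ψ.2.1 p.1))
        ((fderiv ℝ (fun q : (Fin r → ℝ) × (Fin H → ℝ) => l (f q.1 q.2) p.2)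
            (θ0.2.2, reluVec θ0.1 θ0.2.1 p.1)).comp (pr3.prod (sgnCLM p.1 θ0))) θ0 ∧
      ((fderiv ℝ (fun q : (Fin r → ℝ) × (Fin H → ℝ) => l (f q.1 q.2) p.2)
            (θ0.2.2, reluVec θ0.1 θ0.2.1 p.1)).comp (pr3.prod (sgnCLM p.1 θ0))) u = 0 := by
    intro p hp
    set G : ((Fin r → ℝ) × (Fin H → ℝ)) → ℝ := fun q => l (f q.1 q.2) p.2 with hG
    have hGdiff : Differentiable ℝ G := fun q => ((hl p.2).differentiableAt).comp q (hf q)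
    set z : Fin H → ℝ := reluVec θ0.1 θ0.2.1 p.1 with hz
    have hT : HasFDerivAt (fun ψ : P d H r => (ψ.2.2, reluVec ψ.1 ψ.2.1 p.1))
        (pr3.prod (sgnCLM p.1 θ0)) θ0 :=
      (pr3.hasFDerivAt).prodMk (hasFDerivAt_reluVec p.1 θ0 (hnd p hp))
    have hcomp := (hGdiff (θ0.2.2, z)).hasFDerivAt.comp θ0 hT
    constructor
    · exact hcomp
    · -- compute the value on u
      have hSu : (sgnCLM p.1 θ0) u =
          (if 0 < preact θ0.1 θ0.2.1 p.1 h then preact u.1 u.2.1 p.1 h else 0)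
            • (Pi.single h 1 : Fin H → ℝ) := by
        funext h'
        by_cases hh : h' = h
        · subst hh
          simp only [sgnCLM, ContinuousLinearMap.pi_apply, Pi.smul_apply,
            Pi.single_eq_same, smul_eq_mul, mul_one]
          split <;> simp [preactCLM_apply]
        · have h1 := hu1 h' hh
          have h2 := hu2 h' hh
          simp only [sgnCLM, ContinuousLinearMap.pi_apply, Pi.smul_apply,
            Pi.single_eq_of_ne hh, smul_eq_mul, mul_zero]
          split <;> simp [preactCLM_apply, preact, h1, h2]
      have hdF : fderiv ℝ G (θ0.2.2, z) (0, Pi.single h (1:ℝ)) = dFh (Floss f l θ0.2.2 p.2) z h := by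
        have hpart : HasFDerivAt (fun w : Fin H → ℝ => G (θ0.2.2, w))
            ((fderiv ℝ G (θ0.2.2, z)).comp
              ((0 : (Fin H → ℝ) →L[ℝ] (Fin r → ℝ)).prod (ContinuousLinearMap.id ℝ (Fin H → ℝ)))) z :=
          (hGdiff (θ0.2.2, z)).hasFDerivAt.comp z
            ((hasFDerivAt_const θ0.2.2 z).prodMk (hasFDerivAt_id z))
        have : Floss f l θ0.2.2 p.2 = fun w => G (θ0.2.2, w) := rfl
        rw [dFh, this, hpart.fderiv]
        simp
      rw [ContinuousLinearMap.comp_apply, ContinuousLinearMap.prod_apply, hpr3]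
      simp only [ContinuousLinearMap.comp_apply, ContinuousLinearMap.coe_snd', hu3]
      rw [hSu]
      by_cases hpos : 0 < preact θ0.1 θ0.2.1 p.1 h
      · rw [if_pos hpos]
        have h0 : (((0 : Fin r → ℝ), preact u.1 u.2.1 p.1 h • (Pi.single h 1 : Fin H → ℝ)) :
              (Fin r → ℝ) × (Fin H → ℝ)) =
            preact u.1 u.2.1 p.1 h •
              ((((0 : Fin r → ℝ), (Pi.single h 1 : Fin H → ℝ))) : (Fin r → ℝ) × (Fin H → ℝ)) := by
          simp [Prod.smul_mk]
        rw [h0, ContinuousLinearMap.map_smul, hdF, hact p hp hpos]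
        simp
      · rw [if_neg hpos]
        simp
        exact ContinuousLinearMap.map_zero _
  -- sum
  have hsum : HasFDerivAt (fun ψ : P d H r => batchLoss f l ψ B)
      (∑ p ∈ B, (fderiv ℝ (fun q : (Fin r → ℝ) × (Fin H → ℝ) => l (f q.1 q.2) p.2)
            (θ0.2.2, reluVec θ0.1 θ0.2.1 p.1)).comp (pr3.prod (sgnCLM p.1 θ0))) θ0 := by
    have : (fun ψ : P d H r => batchLoss f l ψ B) =
        fun ψ => ∑ p ∈ B, Floss f l ψ.2.2 p.2 (reluVec ψ.1 ψ.2.1 p.1) := rfl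
    rw [this]
    exact HasFDerivAt.fun_sum fun p hp => (main p hp).1
  rw [hsum.fderiv, ContinuousLinearMap.sum_apply]
  exact Finset.sum_eq_zero fun p hp => (main p hp).2

end Stmt14Aux

theorem stmt14 {d H r C K : ℕ} {Y : Type*} (hK : 0 < K)
    (f : (Fin r → ℝ) → (Fin H → ℝ) → Fin C → ℝ)
    (l : (Fin C → ℝ) → Y → ℝ)
    (hf : Differentiable ℝ (fun q : (Fin r → ℝ) × (Fin H → ℝ) => f q.1 q.2))
    (hl : ∀ y, Differentiable ℝ (fun u => l u y))
    (n : ℕ) (η : ℝ) (hη : 0 < η)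
    (θprev : (Fin H → Fin d → ℝ) × (Fin H → ℝ) × (Fin r → ℝ))
    (D : Fin K → Finset ((Fin d → ℝ) × Y))
    (Bt : Fin K → ℕ → Finset ((Fin d → ℝ) × Y))
    (θ : Fin K → ℕ → ((Fin H → Fin d → ℝ) × (Fin H → ℝ) × (Fin r → ℝ)))
    (hBD : ∀ k, ∀ i < n, Bt k i ⊆ D k)
    (hinit : ∀ k, θ k 0 = θprev)
    (hstep : ∀ k, ∀ i < n,
      θ k (i + 1) = θ k i - η • gradP (fun ψ => batchLoss f l ψ (Bt k i)) (θ k i))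
    (hnd : ∀ k, ∀ i < n, ∀ h' : Fin H, ∀ p ∈ Bt k i,
      preact (θ k i).1 (θ k i).2.1 p.1 h' ≠ 0)
    (h : Fin H) (k : Fin K) (ik : ℕ) (hik : ik < n)
    (hne : (activB f l (θ k ik) (Bt k ik) h).Nonempty)
    (hmin : ∀ i < ik, activB f l (θ k i) (Bt k i) h = ∅) :
    ∀ p ∈ activB f l (θ k ik) (Bt k ik) h,
      0 < preact θprev.1 θprev.2.1 p.1 h ∧
      p.1 ∈ roundActiv f l n θ Bt h := by
  classical
  intro p hp
  have hmem := Finset.mem_filter.1 hp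
  have hpB := hmem.1
  have hpos := hmem.2.1
  have frozen : ∀ i, i ≤ ik →
      (θ k i).1 h = θprev.1 h ∧ (θ k i).2.1 h = θprev.2.1 h := by
    intro i
    induction i with
    | zero => intro _; rw [hinit k]; exact ⟨rfl, rfl⟩
    | succ i IH =>
      intro hle
      have hi : i < ik := Nat.lt_of_succ_le hle
      have hin : i < n := lt_trans hi hik
      obtain ⟨e1, e2⟩ := IH (le_of_lt hi)
      have hact : ∀ q ∈ Bt k i, 0 < preact (θ k i).1 (θ k i).2.1 q.1 h →
          dFh (Floss f l (θ k i).2.2 q.2) (reluVec (θ k i).1 (θ k i).2.1 q.1) h = 0 := by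
        intro q hq hq'
        by_contra hne'
        have : q ∈ activB f l (θ k i) (Bt k i) h := Finset.mem_filter.2 ⟨hq, hq', hne'⟩
        rw [hmin i hi] at this
        exact absurd this (Finset.notMem_empty q)
      have hndq : ∀ q ∈ Bt k i, ∀ h', preact (θ k i).1 (θ k i).2.1 q.1 h' ≠ 0 :=
        fun q hq h' => hnd k i hin h' q hq
      have hgrad1 : ∀ j, fderiv ℝ (fun ψ => batchLoss f l ψ (Bt k i)) (θ k i)
          (Pi.single h (Pi.single j 1), 0, 0) = 0 := by
        intro j
        exact Stmt14Aux.fderiv_batchLoss_dir f l hf hl (Bt k i) (θ k i) h hndq hact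
          (Pi.single h (Pi.single j 1), 0, 0)
          (fun h' hh => Pi.single_eq_of_ne hh _) (fun h' hh => rfl) rfl
      have hgrad2 : fderiv ℝ (fun ψ => batchLoss f l ψ (Bt k i)) (θ k i)
          (0, Pi.single h 1, 0) = 0 :=
        Stmt14Aux.fderiv_batchLoss_dir f l hf hl (Bt k i) (θ k i) h hndq hact
          (0, Pi.single h 1, 0)
          (fun h' hh => rfl) (fun h' hh => Pi.single_eq_of_ne hh _) rfl
      have hstepk := hstep k i hin
      constructor
      · rw [hstepk]
        have gW : (gradP (fun ψ => batchLoss f l ψ (Bt k i)) (θ k i)).1 h = 0 :=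
          funext hgrad1
        simp [Prod.fst_sub, Prod.smul_fst, gW, e1]
      · rw [hstepk]
        have gb : (gradP (fun ψ => batchLoss f l ψ (Bt k i)) (θ k i)).2.1 h = 0 := hgrad2
        simp [Prod.snd_sub, Prod.smul_snd, Prod.fst_sub, Prod.smul_fst, gb, e2]
  obtain ⟨eW, eb⟩ := frozen ik le_rfl
  constructor
  · have hsame : preact θprev.1 θprev.2.1 p.1 h = preact (θ k ik).1 (θ k ik).2.1 p.1 h := by
      simp [preact, eW, eb]
    rw [hsame]
    exact hpos
  · exact ⟨k, ik, hik, p.2, by simpa using hp⟩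
end
end
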